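/- arXiv:1603.03661 — 5 statements merged into one kernel-verified Lean document; each statement's English description precedes it below -/
import Mathlib

section
/- Let {K_α}_{α∈A} be an arbitrary family of weakly non-commutative Valdivia compact spaces. Then the product ∏_{α∈A} K_α, with the product topology, is a weakly non-commutative Valdivia compact space. -/
open Filter Topology Set

universe u

section Defs

/-- A space is countably compact if every countable open cover has a finite subcover. -/
def CountablyCompact (X : Type u) [TopologicalSpace X] : Prop :=
  ∀ U : ℕ → Set X, (∀ n, IsOpen (U n)) → (⋃ n, U n) = Set.univ →
    ∃ t : Finset ℕ, (⋃ n ∈ t, U n) = Set.univ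

variable {X : Type u} [TopologicalSpace X]

/-- A retractional skeleton on a topological space `X`. -/
structure IsRetractionalSkeleton {Γ : Type u} [PartialOrder Γ] (r : Γ → X → X) : Prop where
  nonempty : Nonempty Γ
  directed : ∀ s t : Γ, ∃ w, s ≤ w ∧ t ≤ w
  continuous : ∀ s, Continuous (r s)
  retraction : ∀ s, r s ∘ r s = r s
  compact_range : ∀ s, IsCompact (Set.range (r s))
  metrizable_range : ∀ s, TopologicalSpace.MetrizableSpace (Set.range (r s))
  comp_eq_of_le : ∀ s t, s ≤ t → r t ∘ r s = r s ∧ r s ∘ r t = r s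
  seq_sup : ∀ u : ℕ → Γ, Monotone u →
    ∃ t, IsLUB (Set.range u) t ∧
      ∀ x, Filter.Tendsto (fun n => r (u n) x) Filter.atTop (nhds (r t x))
  tendsto_id : ∀ x, Filter.Tendsto (fun s => r s x) Filter.atTop (nhds x)

/-- `X` admits a retractional skeleton (non-commutative Valdivia when `X` is compact). -/
def HasRetractionalSkeleton (X : Type u) [TopologicalSpace X] : Prop :=
  ∃ (Γ : Type u) (_ : PartialOrder Γ) (r : Γ → X → X), IsRetractionalSkeleton r

/-- `X` admits a full retractional skeleton. -/
def HasFullRetractionalSkeleton (X : Type u) [TopologicalSpace X] : Prop :=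
  ∃ (Γ : Type u) (_ : PartialOrder Γ) (r : Γ → X → X),
    IsRetractionalSkeleton r ∧ ∀ x : X, ∃ s, x ∈ Set.range (r s)

/-- A non-commutative Corson countably compact space. -/
def IsNCCorson (X : Type u) [TopologicalSpace X] : Prop :=
  CountablyCompact X ∧ HasFullRetractionalSkeleton X

/-- A weakly non-commutative Corson countably compact space: a countably compact
continuous image of a non-commutative Corson countably compact space. -/
def IsWeaklyNCCorson (Y : Type u) [TopologicalSpace Y] : Prop :=
  CountablyCompact Y ∧
  ∃ (X : Type u) (_ : TopologicalSpace X) (_ : T2Space X) (_ : CompletelyRegularSpace X),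
    IsNCCorson X ∧ ∃ f : X → Y, Continuous f ∧ Function.Surjective f

/-- A weakly non-commutative Valdivia compact space: a compact space with a dense
countably compact subspace which is weakly non-commutative Corson. -/
def IsWeaklyNCValdivia (K : Type u) [TopologicalSpace K] : Prop :=
  CompactSpace K ∧ ∃ D : Set K, Dense D ∧ IsWeaklyNCCorson ↥D

end Defs

-- ===== auxiliary lemmas =====
section Aux
variable {Z : Type u} [TopologicalSpace Z]

lemma countablyCompact_of_closure
    (h : ∀ S : Set Z, S.Countable → IsCompact (closure S)) : CountablyCompact Z := by
  intro U hUopen hUcover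
  by_contra hfin
  push_neg at hfin
  have hx : ∀ n : ℕ, ∃ x : Z, x ∉ ⋃ k ∈ Finset.range (n + 1), U k := by
    intro n
    rcases (Set.ne_univ_iff_exists_notMem _).1 (hfin (Finset.range (n + 1))) with ⟨x, hx⟩
    exact ⟨x, hx⟩
  choose x hxn using hx
  have hS : IsCompact (closure (Set.range x)) := h _ (Set.countable_range x)
  obtain ⟨t, ht⟩ := hS.elim_finite_subcover U hUopen
    (by rw [hUcover]; exact Set.subset_univ _)
  set N := t.sup id with hN
  have hmem : x N ∈ ⋃ k ∈ t, U k := ht (subset_closure (Set.mem_range_self N))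
  rcases Set.mem_iUnion₂.1 hmem with ⟨k, hk, hxk⟩
  refine hxn N (Set.mem_iUnion₂.2 ⟨k, ?_, hxk⟩)
  exact Finset.mem_range.2 (Nat.lt_succ_of_le (Finset.le_sup (f := id) hk))

lemma skeleton_fix [T2Space Z] {Γ : Type u} [PartialOrder Γ] {r : Γ → Z → Z}
    (hr : IsRetractionalSkeleton r) (g : ℕ → Z) (hg : ∀ n, ∃ s, g n ∈ Set.range (r s)) :
    ∃ t, ∀ n, r t (g n) = g n := by
  choose s hs using hg
  choose w hw1 hw2 using hr.directed
  set u : ℕ → Γ := fun n => Nat.rec (s 0) (fun n un => w un (s (n + 1))) n with hu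
  have humono : Monotone u := monotone_nat_of_le_succ fun n => hw1 _ _
  have hsu : ∀ n, s n ≤ u n := by
    intro n
    cases n with
    | zero => exact le_rfl
    | succ m => exact hw2 _ _
  obtain ⟨t, htlub, htconv⟩ := hr.seq_sup u humono
  refine ⟨t, fun n => ?_⟩
  have hfix : ∀ m, n ≤ m → r (u m) (g n) = g n := by
    intro m hm
    obtain ⟨z, hz⟩ := hs n
    have h1 : s n ≤ u m := le_trans (hsu n) (humono hm)
    calc r (u m) (g n) = r (u m) (r (s n) z) := by rw [hz]
    _ = r (s n) z := congrFun (hr.comp_eq_of_le _ _ h1).1 z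
    _ = g n := hz
  have hconst : Filter.Tendsto (fun m => r (u m) (g n)) Filter.atTop (nhds (g n)) := by
    apply Filter.Tendsto.congr' _ tendsto_const_nhds
    filter_upwards [Filter.eventually_ge_atTop n] with m hm
    exact (hfix m hm).symm
  exact tendsto_nhds_unique (htconv (g n)) hconst

lemma countablyCompact_of_fullSkeleton [T2Space Z] (h : HasFullRetractionalSkeleton Z) :
    CountablyCompact Z := by
  obtain ⟨Γ, _, r, hr, hfull⟩ := h
  apply countablyCompact_of_closure
  intro S hS
  rcases S.eq_empty_or_nonempty with rfl | hne
  · rw [closure_empty]; exact isCompact_empty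
  obtain ⟨g, rfl⟩ := hS.exists_eq_range hne
  obtain ⟨t, ht⟩ := skeleton_fix hr g fun n => hfull (g n)
  have hsub : Set.range g ⊆ Set.range (r t) := by
    rintro _ ⟨n, rfl⟩; exact ⟨g n, ht n⟩
  have hclosed := (hr.compact_range t).isClosed
  exact (hr.compact_range t).of_isClosed_subset isClosed_closure (closure_minimal hsub hclosed)

lemma countablyCompact_image {Y : Type u} [TopologicalSpace Y] {f : Z → Y}
    (hZ : CountablyCompact Z) (hf : Continuous f) (hsurj : Function.Surjective f) :
    CountablyCompact Y := by
  intro U hUopen hUcover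
  obtain ⟨t, ht⟩ := hZ (fun n => f ⁻¹' U n) (fun n => (hUopen n).preimage hf)
    (by rw [← Set.preimage_iUnion, hUcover, Set.preimage_univ])
  refine ⟨t, Set.eq_univ_of_forall fun y => ?_⟩
  obtain ⟨z, rfl⟩ := hsurj y
  have hz : z ∈ ⋃ n ∈ t, f ⁻¹' U n := ht ▸ Set.mem_univ z
  rcases Set.mem_iUnion₂.1 hz with ⟨n, hn, hzn⟩
  exact Set.mem_iUnion₂.2 ⟨n, hn, hzn⟩

end Aux
section Aux2
open unitInterval

lemma completelyRegular_pi {ι : Type*} {π : ι → Type*} [∀ i, TopologicalSpace (π i)]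
    [∀ i, CompletelyRegularSpace (π i)] : CompletelyRegularSpace (∀ i, π i) := by
  constructor
  intro x K hK hx
  obtain ⟨J, u, hu, hsub⟩ := isOpen_pi_iff.1 hK.isOpen_compl x hx
  choose g hgc hg0 hg1 using fun (i : ι) (hi : i ∈ J) =>
    CompletelyRegularSpace.completely_regular (x i) (u i)ᶜ (hu i hi).1.isClosed_compl
      (by simp [(hu i hi).2])
  set P : (∀ i, π i) → ℝ := fun y => ∏ i ∈ J.attach, (1 - (g i.1 i.2 (y i.1) : ℝ)) with hP
  have hfac0 : ∀ (i : {i // i ∈ J}) (y : ∀ i, π i), 0 ≤ 1 - (g i.1 i.2 (y i.1) : ℝ) := by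
    intro i y
    have := (g i.1 i.2 (y i.1)).2.2
    linarith
  have hfac1 : ∀ (i : {i // i ∈ J}) (y : ∀ i, π i), 1 - (g i.1 i.2 (y i.1) : ℝ) ≤ 1 := by
    intro i y
    have := (g i.1 i.2 (y i.1)).2.1
    linarith
  have hP0 : ∀ y, 0 ≤ P y := fun y => Finset.prod_nonneg fun i _ => hfac0 i y
  have hP1 : ∀ y, P y ≤ 1 := fun y => Finset.prod_le_one
    (fun i _ => hfac0 i y) (fun i _ => hfac1 i y)
  have hmem : ∀ y, (1 - P y) ∈ I := fun y => ⟨by linarith [hP1 y], by linarith [hP0 y]⟩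
  refine ⟨fun y => ⟨1 - P y, hmem y⟩, ?_, ?_, ?_⟩
  · apply Continuous.subtype_mk
    apply Continuous.sub continuous_const
    exact continuous_finset_prod _ fun i _ =>
      continuous_const.sub
        ((continuous_subtype_val.comp (hgc i.1 i.2)).comp (continuous_apply i.1))
  · have : P x = 1 := Finset.prod_eq_one fun i _ => by
      rw [hg0 i.1 i.2]; norm_num
    apply Subtype.ext
    simp [this]
  · intro y hy
    have hyex : ∃ i ∈ J, y i ∉ u i := by
      by_contra hc
      push_neg at hc
      exact (hsub fun i hi => hc i hi) hy
    obtain ⟨i, hiI, hyi⟩ := hyex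
    have hval : g i hiI (y i) = 1 := hg1 i hiI hyi
    have : P y = 0 := Finset.prod_eq_zero (Finset.mem_attach J ⟨i, hiI⟩) (by rw [hval]; norm_num)
    apply Subtype.ext
    simp [this]

lemma completelyRegular_subtype {Z : Type*} [TopologicalSpace Z] [CompletelyRegularSpace Z]
    (p : Z → Prop) : CompletelyRegularSpace (Subtype p) := by
  constructor
  intro x K hK hx
  obtain ⟨C, hC, hCK⟩ := isClosed_induced_iff.1 hK
  have hxC : (x : Z) ∉ C := fun hmem => hx (by rw [← hCK] at *; exact hmem)
  obtain ⟨f, hfc, hf0, hf1⟩ := CompletelyRegularSpace.completely_regular (x : Z) C hC hxC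
  refine ⟨f ∘ Subtype.val, hfc.comp continuous_subtype_val, hf0, fun y hy => ?_⟩
  exact hf1 (by rw [← hCK] at hy; exact hy)

lemma topology_eq_of_isEmpty {Z : Type*} [IsEmpty Z] (t₁ t₂ : TopologicalSpace Z) : t₁ = t₂ := by
  rw [TopologicalSpace.ext_iff]
  intro s
  rw [Set.eq_empty_of_isEmpty s]
  exact ⟨fun _ => @isOpen_empty _ t₂, fun _ => @isOpen_empty _ t₁⟩

lemma metrizableSpace_of_isEmpty {Z : Type*} [TopologicalSpace Z] [IsEmpty Z] :
    TopologicalSpace.MetrizableSpace Z :=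
  by haveI : DiscreteTopology Z := ⟨Subsingleton.elim _ _⟩; infer_instance

lemma completelyRegular_of_isEmpty {Z : Type*} [TopologicalSpace Z] [IsEmpty Z] :
    CompletelyRegularSpace Z :=
  ⟨fun x => isEmptyElim x⟩

lemma countablyCompact_of_isEmpty {Z : Type u} [TopologicalSpace Z] [IsEmpty Z] :
    CountablyCompact Z := fun U _ _ =>
  ⟨∅, (Set.eq_empty_of_isEmpty _).trans (Set.eq_empty_of_isEmpty _).symm⟩

lemma isNCCorson_of_isEmpty (Z : Type u) [TopologicalSpace Z] [IsEmpty Z] : IsNCCorson Z := by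
  refine ⟨countablyCompact_of_isEmpty, PUnit.{u+1}, inferInstance, fun _ x => x, ?_, fun x => isEmptyElim x⟩
  refine ⟨⟨PUnit.unit⟩, fun s t => ⟨PUnit.unit, le_of_eq (Subsingleton.elim _ _), le_of_eq (Subsingleton.elim _ _)⟩,
    fun _ => continuous_id, fun _ => rfl, ?_, ?_, fun s t _ => ⟨rfl, rfl⟩, ?_, fun x => isEmptyElim x⟩
  · intro s
    have : Set.range (fun x : Z => x) = ∅ := Set.eq_empty_of_isEmpty _
    rw [this]
    exact isCompact_empty
  · intro s
    exact metrizableSpace_of_isEmpty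
  · intro v _
    refine ⟨PUnit.unit, ⟨fun a _ => le_of_eq (Subsingleton.elim _ _),
      fun b _ => le_of_eq (Subsingleton.elim _ _)⟩, fun x => isEmptyElim x⟩

end Aux2
section Sigma

set_option maxHeartbeats 1000000 in
set_option synthInstance.maxHeartbeats 400000 in
lemma hasFullRetractionalSkeleton_sigmaProduct {A : Type u} {XT : A → Type u}
    [∀ α, TopologicalSpace (XT α)] [∀ α, T2Space (XT α)] (p : ∀ α, XT α)
    (hsk : ∀ α, HasFullRetractionalSkeleton (XT α)) :
    HasFullRetractionalSkeleton ↥{x : ∀ α, XT α | {α | x α ≠ p α}.Countable} := by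
  classical
  choose Γ pO r hr hfull using hsk
  choose σ hσ using fun α => hfull α (p α)
  -- basic facts about the component skeletons
  have hidem : ∀ (α) (s : Γ α) (y : XT α), r α s (r α s y) = r α s y :=
    fun α s y => congrFun ((hr α).retraction s) y
  have hfix : ∀ (α) {s t : Γ α}, s ≤ t → ∀ y ∈ Set.range (r α s), r α t y = y := by
    intro α s t hst y hy
    obtain ⟨z, hz⟩ := hy
    rw [← hz]
    exact congrFun ((hr α).comp_eq_of_le s t hst).1 z
  have hfixp : ∀ (α) {t : Γ α}, σ α ≤ t → r α t (p α) = p α :=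
    fun α t ht => hfix α ht (p α) (hσ α)
  set XX : Set (∀ α, XT α) := {x | {α | x α ≠ p α}.Countable} with hXX
  -- the index set
  set GG : Type u := {C : Set A // C.Countable} × (∀ α, {s : Γ α // σ α ≤ s}) with hGG
  -- the retractions
  have hmemXX : ∀ (g : GG) (x : ↥XX),
      (fun α => if α ∈ g.1.1 then r α (g.2 α).1 (x.1 α) else p α) ∈ XX := by
    intro g x
    refine Set.Countable.mono ?_ g.1.2
    intro α hα
    by_contra hC
    exact hα (if_neg hC)
  let RR : GG → ↥XX → ↥XX := fun g x =>
    ⟨fun α => if α ∈ g.1.1 then r α (g.2 α).1 (x.1 α) else p α, hmemXX g x⟩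
  have hcoordP : ∀ (g : GG) (x : ↥XX) (α), α ∈ g.1.1 →
      (RR g x).1 α = r α (g.2 α).1 (x.1 α) := fun g x α hα => if_pos hα
  have hcoordN : ∀ (g : GG) (x : ↥XX) (α), α ∉ g.1.1 → (RR g x).1 α = p α :=
    fun g x α hα => if_neg hα
  -- directedness
  have hdir : ∀ g g' : GG, ∃ w, g ≤ w ∧ g' ≤ w := by
    intro g g'
    choose W hW1 hW2 using fun α => (hr α).directed (g.2 α).1 (g'.2 α).1
    refine ⟨⟨⟨g.1.1 ∪ g'.1.1, g.1.2.union g'.1.2⟩,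
      fun α => ⟨W α, le_trans (g.2 α).2 (hW1 α)⟩⟩, ⟨?_, fun α => ?_⟩, ⟨?_, fun α => ?_⟩⟩
    · exact Set.subset_union_left
    · exact hW1 α
    · exact Set.subset_union_right
    · exact hW2 α
  -- compactness of ranges
  have hcomp : ∀ g : GG, IsCompact (Set.range (RR g)) := by
    intro g
    set Y : ∀ α, Set (XT α) :=
      fun α => if α ∈ g.1.1 then Set.range (r α (g.2 α).1) else {p α} with hY
    have hY1 : ∀ α ∈ g.1.1, Y α = Set.range (r α (g.2 α).1) := fun α hα => if_pos hα
    have hY2 : ∀ α, α ∉ g.1.1 → Y α = {p α} := fun α hα => if_neg hα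
    have himg : Subtype.val '' Set.range (RR g) = Set.univ.pi Y := by
      apply Set.Subset.antisymm
      · rintro _ ⟨_, ⟨x, rfl⟩, rfl⟩
        intro α _
        by_cases hα : α ∈ g.1.1
        · rw [hY1 α hα]
          rw [hcoordP g x α hα]
          exact Set.mem_range_self _
        · rw [hY2 α hα, hcoordN g x α hα]
          exact Set.mem_singleton _
      · intro y hy
        have hyXX : y ∈ XX := by
          refine Set.Countable.mono ?_ g.1.2
          intro α hα
          by_contra hC
          have := hy α (Set.mem_univ α)
          rw [hY2 α hC] at this
          exact hα this
        refine ⟨⟨y, hyXX⟩, ⟨⟨y, hyXX⟩, ?_⟩, rfl⟩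
        apply Subtype.ext
        funext α
        by_cases hα : α ∈ g.1.1
        · rw [hcoordP _ _ _ hα]
          have := hy α (Set.mem_univ α)
          rw [hY1 α hα] at this
          exact hfix α le_rfl _ this
        · rw [hcoordN _ _ _ hα]
          have := hy α (Set.mem_univ α)
          rw [hY2 α hα] at this
          exact this.symm
    rw [Subtype.isCompact_iff, himg]
    apply isCompact_univ_pi
    intro α
    by_cases hα : α ∈ g.1.1
    · rw [hY1 α hα]; exact (hr α).compact_range _
    · rw [hY2 α hα]; exact isCompact_singleton
  -- metrizability of ranges
  have hmetr : ∀ g : GG, TopologicalSpace.MetrizableSpace ↥(Set.range (RR g)) := by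
    intro g
    haveI : CompactSpace ↥(Set.range (RR g)) := isCompact_iff_compactSpace.1 (hcomp g)
    haveI : Countable ↥g.1.1 := g.1.2.to_subtype
    haveI : ∀ β : ↥g.1.1, SecondCountableTopology ↥(Set.range (r β.1 (g.2 β.1).1)) := by
      intro β
      haveI : CompactSpace ↥(Set.range (r β.1 (g.2 β.1).1)) :=
        isCompact_iff_compactSpace.1 ((hr β.1).compact_range _)
      haveI := (hr β.1).metrizable_range (g.2 β.1).1
      letI := TopologicalSpace.metrizableSpaceMetric ↥(Set.range (r β.1 (g.2 β.1).1))
      infer_instance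
    have hmem : ∀ (x : ↥(Set.range (RR g))) (β : ↥g.1.1),
        x.1.1 β.1 ∈ Set.range (r β.1 (g.2 β.1).1) := by
      rintro ⟨_, x, rfl⟩ β
      rw [hcoordP g x β.1 β.2]
      exact Set.mem_range_self _
    set G : ↥(Set.range (RR g)) → ∀ β : ↥g.1.1, ↥(Set.range (r β.1 (g.2 β.1).1)) :=
      fun x β => ⟨x.1.1 β.1, hmem x β⟩ with hG
    have hGc : Continuous G := continuous_pi fun β => Continuous.subtype_mk
      (((continuous_apply β.1).comp continuous_subtype_val).comp continuous_subtype_val) _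
    have hGi : Function.Injective G := by
      rintro ⟨_, x, rfl⟩ ⟨_, y, rfl⟩ hxy
      apply Subtype.ext
      apply Subtype.ext
      funext α
      by_cases hα : α ∈ g.1.1
      · have := congrFun hxy ⟨α, hα⟩
        exact congrArg Subtype.val this
      · show (RR g x).1 α = (RR g y).1 α
        rw [hcoordN _ _ _ hα, hcoordN _ _ _ hα]
    haveI : SecondCountableTopology ↥(Set.range (RR g)) :=
      (hGc.isClosedEmbedding hGi).toIsEmbedding.secondCountableTopology
    haveI : T3Space ↥(Set.range (RR g)) := inferInstance
    exact TopologicalSpace.metrizableSpace_of_t3_secondCountable _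
  -- comp_eq_of_le
  have hcompat : ∀ g g' : GG, g ≤ g' → RR g' ∘ RR g = RR g ∧ RR g ∘ RR g' = RR g := by
    intro g g' hle
    have hC : g.1.1 ⊆ g'.1.1 := hle.1
    have hs : ∀ α, (g.2 α).1 ≤ (g'.2 α).1 := fun α => hle.2 α
    constructor
    · funext x
      apply Subtype.ext
      funext α
      show (RR g' (RR g x)).1 α = (RR g x).1 α
      by_cases hα' : α ∈ g'.1.1
      · rw [hcoordP g' (RR g x) α hα']
        by_cases hα : α ∈ g.1.1
        · rw [hcoordP g x α hα]
          exact congrFun ((hr α).comp_eq_of_le _ _ (hs α)).1 (x.1 α)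
        · rw [hcoordN g x α hα]
          exact hfixp α (g'.2 α).2
      · have hα : α ∉ g.1.1 := fun h => hα' (hC h)
        rw [hcoordN g' (RR g x) α hα', hcoordN g x α hα]
    · funext x
      apply Subtype.ext
      funext α
      show (RR g (RR g' x)).1 α = (RR g x).1 α
      by_cases hα : α ∈ g.1.1
      · rw [hcoordP g (RR g' x) α hα, hcoordP g' x α (hC hα), hcoordP g x α hα]
        exact congrFun ((hr α).comp_eq_of_le _ _ (hs α)).2 (x.1 α)
      · rw [hcoordN g (RR g' x) α hα, hcoordN g x α hα]
  refine ⟨GG, inferInstance, RR, ⟨?_, hdir, ?_, ?_, hcomp, hmetr, hcompat, ?_, ?_⟩, ?_⟩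
  · -- nonempty
    exact ⟨⟨⟨∅, Set.countable_empty⟩, fun α => ⟨σ α, le_rfl⟩⟩⟩
  · -- continuity
    intro g
    apply Continuous.subtype_mk
    apply continuous_pi
    intro α
    by_cases hα : α ∈ g.1.1
    · simp only [if_pos hα]
      exact ((hr α).continuous _).comp ((continuous_apply α).comp continuous_subtype_val)
    · simp only [if_neg hα]
      exact continuous_const
  · -- retraction
    intro g
    funext x
    apply Subtype.ext
    funext α
    show (RR g (RR g x)).1 α = (RR g x).1 α
    by_cases hα : α ∈ g.1.1
    · rw [hcoordP g (RR g x) α hα, hcoordP g x α hα]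
      exact hidem α _ _
    · rw [hcoordN g (RR g x) α hα, hcoordN g x α hα]
  · -- seq_sup
    intro u humono
    have hCmono : ∀ m n, m ≤ n → (u m).1.1 ⊆ (u n).1.1 := fun m n h => (humono h).1
    have hsmono : ∀ α, Monotone fun n => ((u n).2 α).1 :=
      fun α m n h => (humono h).2 α
    choose tα hlub hconv using fun α => (hr α).seq_sup _ (hsmono α)
    have htσ : ∀ α, σ α ≤ tα α :=
      fun α => le_trans ((u 0).2 α).2 ((hlub α).1 (Set.mem_range_self 0))
    set t : GG := ⟨⟨⋃ n, (u n).1.1, Set.countable_iUnion fun n => (u n).1.2⟩,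
      fun α => ⟨tα α, htσ α⟩⟩ with ht
    refine ⟨t, ⟨?_, ?_⟩, ?_⟩
    · rintro _ ⟨n, rfl⟩
      exact ⟨Set.subset_iUnion (fun n => (u n).1.1) n, fun α => (hlub α).1 (Set.mem_range_self n)⟩
    · rintro b hb
      refine ⟨Set.iUnion_subset fun n => (hb (Set.mem_range_self n)).1, fun α => ?_⟩
      refine (hlub α).2 ?_
      rintro _ ⟨n, rfl⟩
      exact (hb (Set.mem_range_self n)).2 α
    · intro x
      rw [tendsto_subtype_rng]
      rw [tendsto_pi_nhds]
      intro α
      by_cases hα : α ∈ t.1.1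
      · obtain ⟨N, hN⟩ : ∃ n, α ∈ (u n).1.1 := Set.mem_iUnion.1 hα
        rw [hcoordP t x α hα]
        refine Filter.Tendsto.congr' ?_ (hconv α (x.1 α))
        filter_upwards [Filter.eventually_ge_atTop N] with n hn
        exact (hcoordP (u n) x α (hCmono N n hn hN)).symm
      · rw [hcoordN t x α hα]
        refine Filter.Tendsto.congr' ?_ tendsto_const_nhds
        apply Filter.Eventually.of_forall
        intro n
        exact (hcoordN (u n) x α fun h => hα (Set.mem_iUnion.2 ⟨n, h⟩)).symm
  · -- tendsto_id
    haveI : Nonempty GG := ⟨⟨⟨∅, Set.countable_empty⟩, fun α => ⟨σ α, le_rfl⟩⟩⟩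
    haveI : IsDirected GG (· ≤ ·) := ⟨hdir⟩
    intro x
    rw [tendsto_subtype_rng, tendsto_pi_nhds]
    intro α
    have key : Filter.Tendsto (fun g : GG => (g.2 α).1) Filter.atTop Filter.atTop := by
      rw [Filter.tendsto_atTop]
      intro a
      rcases (hr α).directed a (σ α) with ⟨w, hw1, hw2⟩
      rw [Filter.atTop_basis.eventually_iff]
      refine ⟨⟨⟨{α}, Set.countable_singleton α⟩,
        Function.update (fun β => ⟨σ β, le_rfl⟩) α ⟨w, hw2⟩⟩, trivial, fun g hg => ?_⟩
      have h2 : Function.update (fun β => (⟨σ β, le_rfl⟩ : {s // σ β ≤ s})) α ⟨w, hw2⟩ α ≤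
          g.2 α := hg.2 α
      rw [Function.update_self] at h2
      exact le_trans hw1 h2
    have h1 : Filter.Tendsto (fun g : GG => r α (g.2 α).1 (x.1 α)) Filter.atTop
        (nhds (x.1 α)) := ((hr α).tendsto_id (x.1 α)).comp key
    refine Filter.Tendsto.congr' ?_ h1
    rw [Filter.EventuallyEq, Filter.atTop_basis.eventually_iff]
    refine ⟨⟨⟨{α}, Set.countable_singleton α⟩, fun β => ⟨σ β, le_rfl⟩⟩, trivial, fun g hg => ?_⟩
    exact (hcoordP g x α (hg.1 rfl)).symm
  · -- fullness
    intro x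
    choose sα hsα using fun α => hfull α (x.1 α)
    choose W hW1 hW2 using fun α => (hr α).directed (sα α) (σ α)
    refine ⟨⟨⟨{α | x.1 α ≠ p α}, x.2⟩, fun α => ⟨W α, hW2 α⟩⟩, x, ?_⟩
    apply Subtype.ext
    funext α
    by_cases hα : x.1 α ≠ p α
    · have hmem : α ∈ ({β | x.1 β ≠ p β} : Set A) := hα
      rw [hcoordP _ x α hmem]
      exact hfix α (hW1 α) _ (hsα α)
    · push_neg at hα
      have hmem : α ∉ ({β | x.1 β ≠ p β} : Set A) := fun h =>
        (h : x.1 α ≠ p α) hα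
      rw [hcoordN _ x α hmem]
      exact hα.symm

end Sigma


set_option maxHeartbeats 1000000 in
set_option synthInstance.maxHeartbeats 400000 in
/-- An arbitrary product of weakly non-commutative Valdivia compact spaces
is a weakly non-commutative Valdivia compact space. -/
theorem prod_of_weaklyNCValdivia
    {A : Type u} {K : A → Type u} [∀ α, TopologicalSpace (K α)] [∀ α, T2Space (K α)]
    (h : ∀ α, IsWeaklyNCValdivia (K α)) :
    IsWeaklyNCValdivia (∀ α, K α) := by
  classical
  haveI : ∀ α, CompactSpace (K α) := fun α => (h α).1
  refine ⟨inferInstance, ?_⟩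
  by_cases hne : Nonempty (∀ α, K α)
  case neg =>
    haveI hempty : IsEmpty (∀ α, K α) := not_nonempty_iff.1 hne
    haveI : IsEmpty ↥(∅ : Set (∀ α, K α)) := ⟨fun x => x.2⟩
    refine ⟨∅, fun x => isEmptyElim x, (isNCCorson_of_isEmpty _).1,
      ↥(∅ : Set (∀ α, K α)), inferInstance, inferInstance, completelyRegular_of_isEmpty,
      isNCCorson_of_isEmpty _, id, continuous_id, Function.surjective_id⟩
  case pos =>
    have hKne : ∀ α, Nonempty (K α) := fun α => ⟨hne.some α⟩
    choose Dset hDdense hDwc using fun α => (h α).2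
    choose XT tX t2X crX ncX f hfc hfs using fun α => (hDwc α).2
    letI : ∀ α, TopologicalSpace (XT α) := tX
    haveI : ∀ α, T2Space (XT α) := t2X
    haveI : ∀ α, CompletelyRegularSpace (XT α) := crX
    have hXne : ∀ α, Nonempty (XT α) := by
      intro α
      obtain ⟨y, hy⟩ := (hDdense α).nonempty
      obtain ⟨x, -⟩ := hfs α ⟨y, hy⟩
      exact ⟨x⟩
    set p : ∀ α, XT α := fun α => (hXne α).some with hp
    set d : ∀ α, K α := fun α => (f α (p α) : K α) with hd
    have hdD : ∀ α, d α ∈ Dset α := fun α => (f α (p α)).2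
    set XX : Set (∀ α, XT α) := {x | {α | x α ≠ p α}.Countable} with hXXdef
    have hXXfull : HasFullRetractionalSkeleton ↥XX :=
      hasFullRetractionalSkeleton_sigmaProduct p fun α => (ncX α).2
    haveI : CompletelyRegularSpace (∀ α, XT α) := completelyRegular_pi
    haveI : CompletelyRegularSpace ↥XX := completelyRegular_subtype _
    have hXXcc : CountablyCompact ↥XX := countablyCompact_of_fullSkeleton hXXfull
    set Dsub : Set (∀ α, K α) :=
      {y | (∀ α, y α ∈ Dset α) ∧ {α | y α ≠ d α}.Countable} with hDsub
    -- the map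
    have hFmem : ∀ x : ↥XX, (fun α => (f α (x.1 α) : K α)) ∈ Dsub := by
      intro x
      refine ⟨fun α => (f α (x.1 α)).2, Set.Countable.mono ?_ x.2⟩
      intro α hα
      by_contra hC
      have hC' : x.1 α = p α := not_not.1 hC
      exact hα (by show (f α (x.1 α) : K α) = d α; rw [hC'])
    set F : ↥XX → ↥Dsub := fun x => ⟨fun α => (f α (x.1 α) : K α), hFmem x⟩ with hF
    have hFc : Continuous F := by
      apply Continuous.subtype_mk
      apply continuous_pi
      intro α
      exact continuous_subtype_val.comp
        ((hfc α).comp ((continuous_apply α).comp continuous_subtype_val))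
    have hFs : Function.Surjective F := by
      intro y
      have key : ∀ α, ∃ xα : XT α, (f α xα : K α) = y.1 α ∧ (y.1 α = d α → xα = p α) := by
        intro α
        by_cases hyd : y.1 α = d α
        · exact ⟨p α, by rw [hyd], fun _ => rfl⟩
        · obtain ⟨xα, hxα⟩ := hfs α ⟨y.1 α, y.2.1 α⟩
          exact ⟨xα, by rw [hxα], fun hc => absurd hc hyd⟩
      choose x hx1 hx2 using key
      have hxXX : x ∈ XX := by
        refine Set.Countable.mono ?_ y.2.2
        intro α hα
        by_contra hC
        have hC' : y.1 α = d α := not_not.1 hC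
        exact hα (hx2 α hC')
      refine ⟨⟨x, hxXX⟩, ?_⟩
      apply Subtype.ext
      funext α
      exact hx1 α
    -- density
    have hdense : Dense Dsub := by
      rw [dense_iff_inter_open]
      rintro U hU ⟨y0, hy0⟩
      obtain ⟨J, u, hu, hsub⟩ := isOpen_pi_iff.1 hU y0 hy0
      have key : ∀ α, ∃ zα : K α, zα ∈ Dset α ∧ (α ∈ J → zα ∈ u α) ∧ (α ∉ J → zα = d α) := by
        intro α
        by_cases hα : α ∈ J
        · obtain ⟨z, hz1, hz2⟩ := (hDdense α).inter_open_nonempty (u α) (hu α hα).1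
            ⟨y0 α, (hu α hα).2⟩
          exact ⟨z, hz2, fun _ => hz1, fun hc => absurd hα hc⟩
        · exact ⟨d α, hdD α, fun hc => absurd hc hα, fun _ => rfl⟩
      choose z hz1 hz2 hz3 using key
      refine ⟨z, hsub fun α hα => hz2 α hα, hz1, Set.Countable.mono ?_ J.finite_toSet.countable⟩
      intro α hα
      by_contra hC
      exact hα (hz3 α hC)
    exact ⟨Dsub, hdense, countablyCompact_image hXXcc hFc hFs,
      ↥XX, inferInstance, inferInstance, inferInstance,
      ⟨hXXcc, hXXfull⟩, F, hFc, hFs⟩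
end

section
/- Let K be a weakly non-commutative Valdivia compact space and let L ⊆ K be a subset which is the closure of a union of an arbitrary family of G_δ subsets of K. Then L, with the subspace topology, is a weakly non-commutative Valdivia compact space. -/
open Filter Topology Set

universe u

section Aux

lemma countablyCompact_of_image {Y : Type u} {W : Type u} [TopologicalSpace Y]
    [TopologicalSpace W] (h : CountablyCompact Y) {φ : Y → W} (hc : Continuous φ)
    (hs : Function.Surjective φ) : CountablyCompact W := by
  intro U hU hcov
  obtain ⟨t, ht⟩ := h (fun n => φ ⁻¹' U n) (fun n => (hU n).preimage hc)
    (by rw [← Set.preimage_iUnion, hcov, Set.preimage_univ])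
  refine ⟨t, Set.eq_univ_of_forall fun w => ?_⟩
  obtain ⟨y, rfl⟩ := hs w
  have hy : y ∈ ⋃ n ∈ t, φ ⁻¹' U n := ht ▸ Set.mem_univ y
  obtain ⟨n, hn, hyn⟩ := Set.mem_iUnion₂.1 hy
  exact Set.mem_iUnion₂.2 ⟨n, hn, hyn⟩

lemma countablyCompact_subtype_of_isClosed {Y : Type u} [TopologicalSpace Y]
    (h : CountablyCompact Y) {C : Set Y} (hC : IsClosed C) : CountablyCompact ↥C := by
  intro U hU hcov
  choose V hVopen hVeq using fun n => isOpen_induced_iff.mp (hU n)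
  have hcover : (⋃ n, (V n ∪ Cᶜ)) = Set.univ := by
    refine Set.eq_univ_of_forall fun y => ?_
    by_cases hy : y ∈ C
    · have : (⟨y, hy⟩ : ↥C) ∈ ⋃ n, U n := hcov ▸ Set.mem_univ _
      obtain ⟨n, hn⟩ := Set.mem_iUnion.1 this
      have : y ∈ V n := by rw [← hVeq n] at hn; exact hn
      exact Set.mem_iUnion.2 ⟨n, Or.inl this⟩
    · exact Set.mem_iUnion.2 ⟨0, Or.inr hy⟩
  obtain ⟨t, ht⟩ := h (fun n => V n ∪ Cᶜ)
    (fun n => (hVopen n).union hC.isOpen_compl) hcover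
  refine ⟨t, Set.eq_univ_of_forall fun x => ?_⟩
  have hx : (x : Y) ∈ ⋃ n ∈ t, (V n ∪ Cᶜ) := ht ▸ Set.mem_univ _
  obtain ⟨n, hn, hxn⟩ := Set.mem_iUnion₂.1 hx
  rcases hxn with hxV | hxC
  · exact Set.mem_iUnion₂.2 ⟨n, hn, by rw [← hVeq n]; exact hxV⟩
  · exact absurd x.2 hxC

lemma countablyCompact_iInter_nonempty {Y : Type u} [TopologicalSpace Y]
    (h : CountablyCompact Y) (C : ℕ → Set Y) (hcl : ∀ n, IsClosed (C n))
    (hne : ∀ N, (⋂ n ∈ Finset.range (N + 1), C n).Nonempty) :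
    (⋂ n, C n).Nonempty := by
  by_contra hemp
  rw [Set.not_nonempty_iff_eq_empty] at hemp
  obtain ⟨t, ht⟩ := h (fun n => (C n)ᶜ) (fun n => (hcl n).isOpen_compl)
    (by rw [← Set.compl_iInter, hemp, Set.compl_empty])
  obtain ⟨y, hy⟩ := hne (t.sup id)
  have hy' : y ∈ ⋃ n ∈ t, (C n)ᶜ := ht ▸ Set.mem_univ _
  obtain ⟨n, hn, hyn⟩ := Set.mem_iUnion₂.1 hy'
  exact hyn (Set.mem_iInter₂.1 hy n (Finset.mem_range.2 (Nat.lt_succ_of_le (Finset.le_sup (f := id) hn))))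

lemma dense_cc_meets_gdelta {K : Type u} [TopologicalSpace K] [T2Space K] [CompactSpace K]
    {D : Set K} (hD : Dense D) (hcc : CountablyCompact ↥D)
    {G : Set K} (hG : IsGδ G) (hne : G.Nonempty) : (G ∩ D).Nonempty := by
  obtain ⟨U, hUopen, rfl⟩ := hG.eq_iInter_nat
  obtain ⟨p, hp⟩ := hne
  have hpU : ∀ n, p ∈ U n := fun n => Set.mem_iInter.1 hp n
  -- step: shrink an open nbhd of p inside U n
  have key : ∀ (n : ℕ) (V : Set K), IsOpen V → p ∈ V →
      ∃ W : Set K, IsOpen W ∧ p ∈ W ∧ closure W ⊆ V ∩ U n := by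
    intro n V hV hpV
    have hmem : V ∩ U n ∈ 𝓝 p := Filter.inter_mem (hV.mem_nhds hpV) ((hUopen n).mem_nhds (hpU n))
    obtain ⟨s, hs, hscl, hssub⟩ := exists_mem_nhds_isClosed_subset hmem
    exact ⟨interior s, isOpen_interior, mem_interior_iff_mem_nhds.2 hs,
      (closure_minimal interior_subset hscl).trans hssub⟩
  choose step hso hsp hscl using key
  -- recursively defined shrinking opens, carrying invariants in a subtype
  let T := {V : Set K // IsOpen V ∧ p ∈ V}
  let W' : ℕ → T := fun n => Nat.rec
    (⟨step 0 Set.univ isOpen_univ (Set.mem_univ p),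
      hso 0 Set.univ isOpen_univ (Set.mem_univ p), hsp 0 Set.univ isOpen_univ (Set.mem_univ p)⟩)
    (fun n Wn => ⟨step (n + 1) Wn.1 Wn.2.1 Wn.2.2,
      hso (n + 1) Wn.1 Wn.2.1 Wn.2.2, hsp (n + 1) Wn.1 Wn.2.1 Wn.2.2⟩) n
  let W : ℕ → Set K := fun n => (W' n).1
  have hWopen : ∀ n, IsOpen (W n) := fun n => (W' n).2.1
  have hWp : ∀ n, p ∈ W n := fun n => (W' n).2.2
  have hWcl0 : closure (W 0) ⊆ U 0 := by
    have := hscl 0 Set.univ isOpen_univ (Set.mem_univ p)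
    exact fun x hx => (this hx).2
  have hWclS : ∀ n, closure (W (n + 1)) ⊆ W n ∩ U (n + 1) := by
    intro n
    exact hscl (n + 1) (W' n).1 (W' n).2.1 (W' n).2.2
  have hWanti : ∀ {m n : ℕ}, m ≤ n → W n ⊆ W m := by
    intro m n h
    induction h with
    | refl => exact fun _ hx => hx
    | step h ih => exact fun x hx => ih ((hWclS _ (subset_closure hx)).1)
  -- pick points of D in each W n
  have hpick : ∀ n, ∃ d ∈ D, d ∈ W n := fun n =>
    hD.exists_mem_open (hWopen n) ⟨p, hWp n⟩
  choose d hdD hdW using hpick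
  let dd : ℕ → ↥D := fun n => ⟨d n, hdD n⟩
  -- cluster point via countable compactness
  have hCne : ∀ N, (⋂ n ∈ Finset.range (N + 1), closure (dd '' Set.Ici n)).Nonempty := by
    intro N
    refine ⟨dd N, Set.mem_iInter₂.2 fun n hn => subset_closure ⟨N, ?_, rfl⟩⟩
    exact Nat.lt_succ_iff.1 (Finset.mem_range.1 hn)
  obtain ⟨y, hy⟩ := countablyCompact_iInter_nonempty hcc
    (fun n => closure (dd '' Set.Ici n)) (fun n => isClosed_closure) hCne
  have hyW : ∀ N, (y : K) ∈ closure (W N) := by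
    intro N
    refine map_mem_closure continuous_subtype_val (Set.mem_iInter.1 hy N) ?_
    rintro z ⟨n, hn, rfl⟩
    exact hWanti hn (hdW n)
  refine ⟨(y : K), Set.mem_iInter.2 fun n => ?_, y.2⟩
  cases n with
  | zero => exact hWcl0 (hyW 0)
  | succ m => exact (hWclS m (hyW (m + 1))).2


section Skel

variable {X : Type u} [TopologicalSpace X]

namespace IsRetractionalSkeleton

variable {Γ : Type u} [PartialOrder Γ] {r : Γ → X → X}

lemma fix_of_mem_range (hsk : IsRetractionalSkeleton r) {s : Γ} {x : X}
    (h : x ∈ Set.range (r s)) : r s x = x := by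
  obtain ⟨y, rfl⟩ := h
  exact congrFun (hsk.retraction s) y

lemma fix_of_le (hsk : IsRetractionalSkeleton r) {s t : Γ} {x : X}
    (h : x ∈ Set.range (r s)) (hle : s ≤ t) : r t x = x := by
  have h1 : r s x = x := hsk.fix_of_mem_range h
  have h2 := congrFun (hsk.comp_eq_of_le s t hle).1 x
  simp only [Function.comp_apply] at h2
  rw [h1] at h2
  exact h2

lemma countable_bound (hsk : IsRetractionalSkeleton r) (c : ℕ → Γ) :
    ∃ b : Γ, ∀ n, c n ≤ b := by
  choose w hw1 hw2 using hsk.directed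
  let v : ℕ → Γ := fun n => Nat.rec (c 0) (fun n vn => w vn (c (n + 1))) n
  have hmono : Monotone v := monotone_nat_of_le_succ fun n => hw1 _ _
  obtain ⟨t, ht, -⟩ := hsk.seq_sup v hmono
  refine ⟨t, fun n => ?_⟩
  have h1 : c n ≤ v n := by
    cases n with
    | zero => exact le_rfl
    | succ m => exact hw2 _ _
  exact h1.trans (ht.1 ⟨n, rfl⟩)

/-- Single closing-off step: bound the "supports" of a countable set whose image
under `r a` is dense in `r a '' X'`. -/
lemma step_lemma (hsk : IsRetractionalSkeleton r)
    (hfull : ∀ x : X, ∃ s, x ∈ Set.range (r s)) (X' : Set X) (a : Γ) :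
    ∃ b : Γ, a ≤ b ∧ ∃ Q : Set X, Q ⊆ X' ∧ (r a '' X' ⊆ closure (r a '' Q)) ∧
      ∀ q ∈ Q, r b q = q := by
  classical
  haveI : CompactSpace ↥(Set.range (r a)) := isCompact_iff_compactSpace.mp (hsk.compact_range a)
  haveI := hsk.metrizable_range a
  haveI : SecondCountableTopology ↥(Set.range (r a)) := inferInstance
  set P : Set ↥(Set.range (r a)) := {z | (z : X) ∈ r a '' X'} with hPdef
  obtain ⟨E₀, hE₀c, hE₀d⟩ := TopologicalSpace.exists_countable_dense ↥P
  set E : Set X := (fun z : ↥P => ((z : ↥(Set.range (r a))) : X)) '' E₀ with hEdef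
  have hEc : E.Countable := (hE₀c.image _)
  have hEsub : E ⊆ r a '' X' := by
    rintro x ⟨z, hz, rfl⟩
    exact z.2
  have hEdense : r a '' X' ⊆ closure E := by
    intro y hy
    have hyR : y ∈ Set.range (r a) := by
      obtain ⟨x, -, rfl⟩ := hy
      exact Set.mem_range_self x
    rw [mem_closure_iff]
    intro o ho hyo
    set O : Set ↥P := {z | ((z : ↥(Set.range (r a))) : X) ∈ o} with hOdef
    have hOopen : IsOpen O :=
      ho.preimage (continuous_subtype_val.comp continuous_subtype_val)
    have hOne : O.Nonempty := ⟨⟨⟨y, hyR⟩, hy⟩, hyo⟩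
    obtain ⟨e, heE₀, heO⟩ := hE₀d.exists_mem_open hOopen hOne
    exact ⟨((e : ↥(Set.range (r a))) : X), heO, ⟨e, heE₀, rfl⟩⟩
  -- choose preimages in X'
  have hpre : ∀ e : ↥E, ∃ x, x ∈ X' ∧ r a x = (e : X) := by
    rintro ⟨e, he⟩
    obtain ⟨x, hx, hxe⟩ := hEsub he
    exact ⟨x, hx, hxe⟩
  choose ξ hξ1 hξ2 using hpre
  haveI : Countable ↥E := hEc.to_subtype
  set Q : Set X := Set.range ξ with hQdef
  have hQsub : Q ⊆ X' := by rintro q ⟨e, rfl⟩; exact hξ1 e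
  have hQim : E ⊆ r a '' Q := by
    intro e he
    exact ⟨ξ ⟨e, he⟩, ⟨⟨e, he⟩, rfl⟩, hξ2 ⟨e, he⟩⟩
  -- bound the supports
  have hfix : ∀ q : ↥Q, ∃ s : Γ, r s (q : X) = (q : X) := by
    intro q
    obtain ⟨s, hs⟩ := hfull (q : X)
    exact ⟨s, hsk.fix_of_mem_range hs⟩
  choose σ hσ using hfix
  have hQdense : r a '' X' ⊆ closure (r a '' Q) :=
    fun y hy => closure_mono hQim (hEdense hy)
  haveI : Countable ↥Q := (Set.countable_range ξ).to_subtype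
  by_cases hQne : Nonempty ↥Q
  · obtain ⟨enum, henum⟩ := exists_surjective_nat ↥Q
    obtain ⟨b₀, hb₀⟩ := hsk.countable_bound (fun n => σ (enum n))
    obtain ⟨b, hab, hb₀b⟩ := hsk.directed a b₀
    refine ⟨b, hab, Q, hQsub, hQdense, fun q hq => ?_⟩
    obtain ⟨n, hn⟩ := henum ⟨q, hq⟩
    have hσb : σ ⟨q, hq⟩ ≤ b := by
      rw [← hn]
      exact (hb₀ n).trans hb₀b
    exact hsk.fix_of_le ⟨q, hσ ⟨q, hq⟩⟩ hσb
  · exact ⟨a, le_rfl, Q, hQsub, hQdense, fun q hq => absurd ⟨⟨q, hq⟩⟩ hQne⟩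



/-- Key closing-off lemma: indices whose retraction preserves a closed set `X'`
are cofinal, provided the skeleton is full. -/
lemma key_cofinal [T2Space X] (hsk : IsRetractionalSkeleton r)
    (hfull : ∀ x : X, ∃ s, x ∈ Set.range (r s)) {X' : Set X} (hX' : IsClosed X')
    (s₀ : Γ) : ∃ t : Γ, s₀ ≤ t ∧ ∀ x ∈ X', r t x ∈ X' := by
  classical
  choose step hstep_le Qf hQsub hQdense hQfix using fun a => hsk.step_lemma hfull X' a
  set s : ℕ → Γ := fun n => step^[n] s₀ with hsdef
  have hs0 : s 0 = s₀ := rfl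
  have hs_succ : ∀ n, s (n + 1) = step (s n) := fun n => Function.iterate_succ_apply' step n s₀
  have hmono : Monotone s := monotone_nat_of_le_succ (fun n => by rw [hs_succ]; exact hstep_le (s n))
  obtain ⟨t, htlub, htconv⟩ := hsk.seq_sup s hmono
  have hst : ∀ n, s n ≤ t := fun n => htlub.1 ⟨n, rfl⟩
  refine ⟨t, hs0 ▸ hst 0, ?_⟩
  intro x hx
  -- the range of `r t`, a compact metrizable space
  set R : Set X := Set.range (r t) with hRdef
  haveI : CompactSpace ↥R := isCompact_iff_compactSpace.mp (hsk.compact_range t)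
  have hfixR : ∀ z : ↥R, r t (z : X) = (z : X) := fun z => hsk.fix_of_mem_range z.2
  -- embed ↥R into the countable product via the r (s n)
  set Φ : ↥R → (ℕ → X) := fun z n => r (s n) (z : X) with hΦdef
  have hΦcont : Continuous Φ :=
    continuous_pi fun n => (hsk.continuous (s n)).comp continuous_subtype_val
  have hΦinj : Function.Injective Φ := by
    intro z z' hzz
    have h1 : Filter.Tendsto (fun n => r (s n) (z : X)) Filter.atTop (nhds (z : X)) := by
      have := htconv (z : X)
      rwa [hfixR z] at this
    have h2 : Filter.Tendsto (fun n => r (s n) (z' : X)) Filter.atTop (nhds (z' : X)) := by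
      have := htconv (z' : X)
      rwa [hfixR z'] at this
    have heq : (fun n => r (s n) (z : X)) = fun n => r (s n) (z' : X) := hzz
    rw [heq] at h1
    exact Subtype.ext (tendsto_nhds_unique h1 h2)
  have hΦemb : Topology.IsEmbedding Φ := (hΦcont.isClosedEmbedding hΦinj).toIsEmbedding
  -- show r t x ∈ closure of the union of the Q's, which is inside X'
  have hclosure : r t x ∈ closure (⋃ n, Qf (s n)) := by
    rw [mem_closure_iff]
    intro o ho hyo
    have hyR : r t x ∈ R := Set.mem_range_self x
    set Y : ↥R := ⟨r t x, hyR⟩ with hYdef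
    have hU'open : IsOpen ((Subtype.val : ↥R → X) ⁻¹' o) := ho.preimage continuous_subtype_val
    obtain ⟨W, hWopen, hWpre⟩ := (hΦemb.isOpen_iff).mp hU'open
    have hYW : Φ Y ∈ W := by
      have : Y ∈ Φ ⁻¹' W := by rw [hWpre]; exact hyo
      exact this
    obtain ⟨I, V, hV, hpi⟩ := (isOpen_pi_iff.mp hWopen) (Φ Y) hYW
    set N : ℕ := I.sup id with hNdef
    have hmemI : ∀ m ∈ I, m ≤ N := fun m hm => Finset.le_sup (f := id) hm
    set O : Set X := ⋂ m ∈ I, r (s m) ⁻¹' (V m) with hOdef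
    have hOopen : IsOpen O :=
      isOpen_biInter_finset fun m hm => ((hV m hm).1).preimage (hsk.continuous _)
    have hYO : r (s N) x ∈ O := by
      refine Set.mem_iInter₂.2 fun m hm => ?_
      have e1 : r (s m) (r (s N) x) = r (s m) x :=
        congrFun (hsk.comp_eq_of_le (s m) (s N) (hmono (hmemI m hm))).2 x
      have e2 : r (s m) (r t x) = r (s m) x :=
        congrFun (hsk.comp_eq_of_le (s m) t (hst m)).2 x
      have e3 : Φ Y m ∈ V m := (hV m hm).2
      have e4 : Φ Y m = r (s m) x := e2
      show r (s m) (r (s N) x) ∈ V m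
      rw [e1, ← e4]
      exact e3
    have hxN : r (s N) x ∈ closure (r (s N) '' Qf (s N)) :=
      hQdense (s N) ⟨x, hx, rfl⟩
    obtain ⟨w, hwO, q, hqQ, hwq⟩ := mem_closure_iff.mp hxN O hOopen hYO
    -- q is the desired witness
    have hqfixN : r (s (N + 1)) q = q := by
      have := hQfix (s N) q hqQ
      rwa [← hs_succ N] at this
    have hqR : q ∈ R := ⟨q, hsk.fix_of_le ⟨q, hqfixN⟩ (hst (N + 1))⟩
    have hqpi : Φ (⟨q, hqR⟩ : ↥R) ∈ (I : Set ℕ).pi V := by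
      refine Set.mem_pi.2 fun m hm => ?_
      have e1 : r (s m) q = r (s m) (r (s N) q) :=
        (congrFun (hsk.comp_eq_of_le (s m) (s N) (hmono (hmemI m hm))).2 q).symm
      show r (s m) q ∈ V m
      rw [e1, hwq]
      exact Set.mem_iInter₂.1 hwO m hm
    have hqo : q ∈ o := by
      have : (⟨q, hqR⟩ : ↥R) ∈ Φ ⁻¹' W := Set.mem_preimage.2 (hpi hqpi)
      rw [hWpre] at this
      exact this
    exact ⟨q, hqo, Set.mem_iUnion.2 ⟨N, hqQ⟩⟩
  have hsub : closure (⋃ n, Qf (s n)) ⊆ X' := by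
    rw [← hX'.closure_eq]
    exact closure_mono (Set.iUnion_subset fun n => hQsub (s n))
  exact hsub hclosure

end IsRetractionalSkeleton

end Skel

lemma restricted_full_skeleton {X : Type u} [TopologicalSpace X] [T2Space X]
    {Γ : Type u} [PartialOrder Γ] {r : Γ → X → X}
    (hsk : IsRetractionalSkeleton r) (hfull : ∀ x : X, ∃ s, x ∈ Set.range (r s))
    {X' : Set X} (hX' : IsClosed X') : HasFullRetractionalSkeleton ↥X' := by
  classical
  set S : Set Γ := {s | ∀ x ∈ X', r s x ∈ X'} with hSdef
  have hcof : ∀ a : Γ, ∃ s : ↥S, a ≤ (s : Γ) := by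
    intro a
    obtain ⟨t, h1, h2⟩ := hsk.key_cofinal hfull hX' a
    exact ⟨⟨t, h2⟩, h1⟩
  set r' : ↥S → ↥X' → ↥X' := fun s x => ⟨r (s : Γ) (x : X), s.2 (x : X) x.2⟩ with hr'def
  have hSne : Nonempty ↥S := by
    obtain ⟨a⟩ := hsk.nonempty
    obtain ⟨s, -⟩ := hcof a
    exact ⟨s⟩
  have hSdirected : ∀ s t : ↥S, ∃ w, s ≤ w ∧ t ≤ w := by
    intro s t
    obtain ⟨w, hw1, hw2⟩ := hsk.directed (s : Γ) (t : Γ)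
    obtain ⟨w', hw'⟩ := hcof w
    exact ⟨w', Subtype.coe_le_coe.1 (hw1.trans hw'), Subtype.coe_le_coe.1 (hw2.trans hw')⟩
  have hcont : ∀ s : ↥S, Continuous (r' s) := fun s =>
    Continuous.subtype_mk ((hsk.continuous (s : Γ)).comp continuous_subtype_val) _
  have hretr : ∀ s : ↥S, r' s ∘ r' s = r' s := by
    intro s
    funext x
    exact Subtype.ext (congrFun (hsk.retraction (s : Γ)) (x : X))
  have hrange : ∀ s : ↥S, Subtype.val '' Set.range (r' s) = Set.range (r (s : Γ)) ∩ X' := by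
    intro s
    apply Set.Subset.antisymm
    · rintro _ ⟨_, ⟨x, rfl⟩, rfl⟩
      exact ⟨Set.mem_range_self _, (r' s x).2⟩
    · rintro y ⟨hy1, hy2⟩
      exact ⟨r' s ⟨y, hy2⟩, Set.mem_range_self _, hsk.fix_of_mem_range hy1⟩
  have hcomp : ∀ s : ↥S, IsCompact (Set.range (r' s)) := by
    intro s
    rw [Subtype.isCompact_iff, hrange s]
    exact (hsk.compact_range (s : Γ)).inter_right hX'
  have hmetr : ∀ s : ↥S, TopologicalSpace.MetrizableSpace ↥(Set.range (r' s)) := by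
    intro s
    haveI := hsk.metrizable_range (s : Γ)
    have hsub : ∀ z : ↥(Set.range (r' s)), ((z : ↥X') : X) ∈ Set.range (r (s : Γ)) := by
      rintro ⟨z, x, rfl⟩
      exact Set.mem_range_self _
    set e : ↥(Set.range (r' s)) → ↥(Set.range (r (s : Γ))) :=
      fun z => ⟨((z : ↥X') : X), hsub z⟩ with hedef
    have hecont : Continuous e :=
      Continuous.subtype_mk (continuous_subtype_val.comp continuous_subtype_val) _
    have hecomp : Topology.IsEmbedding ((Subtype.val : _ → X) ∘ e) := by
      have h1 : (Subtype.val : _ → X) ∘ e =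
          (Subtype.val : ↥X' → X) ∘ (Subtype.val : ↥(Set.range (r' s)) → ↥X') := rfl
      rw [h1]
      exact Topology.IsEmbedding.subtypeVal.comp Topology.IsEmbedding.subtypeVal
    have hemb : Topology.IsEmbedding e :=
      Topology.IsEmbedding.of_comp hecont continuous_subtype_val hecomp
    exact hemb.metrizableSpace
  have hcompeq : ∀ s t : ↥S, s ≤ t → r' t ∘ r' s = r' s ∧ r' s ∘ r' t = r' s := by
    intro s t hle
    have h := hsk.comp_eq_of_le (s : Γ) (t : Γ) (Subtype.coe_le_coe.2 hle)
    exact ⟨funext fun x => Subtype.ext (congrFun h.1 (x : X)),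
      funext fun x => Subtype.ext (congrFun h.2 (x : X))⟩
  have hseq : ∀ u : ℕ → ↥S, Monotone u → ∃ t, IsLUB (Set.range u) t ∧
      ∀ x : ↥X', Filter.Tendsto (fun n => r' (u n) x) Filter.atTop (nhds (r' t x)) := by
    intro u hu
    have hu' : Monotone (fun n => (u n : Γ)) := fun a b h => Subtype.coe_le_coe.2 (hu h)
    obtain ⟨t, htlub, htconv⟩ := hsk.seq_sup _ hu'
    have htS : t ∈ S := by
      intro x hx
      exact hX'.mem_of_tendsto (htconv x)
        (Filter.Eventually.of_forall fun n => (u n).2 x hx)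
    refine ⟨⟨t, htS⟩, ⟨?_, ?_⟩, ?_⟩
    · rintro _ ⟨n, rfl⟩
      exact Subtype.coe_le_coe.1 (htlub.1 ⟨n, rfl⟩)
    · intro b hb
      refine Subtype.coe_le_coe.1 (htlub.2 ?_)
      rintro _ ⟨n, rfl⟩
      exact Subtype.coe_le_coe.2 (hb ⟨n, rfl⟩)
    · intro x
      rw [tendsto_subtype_rng]
      exact htconv (x : X)
  haveI : Nonempty Γ := hsk.nonempty
  haveI : IsDirected Γ (· ≤ ·) := ⟨hsk.directed⟩
  haveI : Nonempty ↥S := hSne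
  haveI : IsDirected ↥S (· ≤ ·) := ⟨hSdirected⟩
  have hval : Filter.Tendsto (Subtype.val : ↥S → Γ) Filter.atTop Filter.atTop :=
    tendsto_atTop_atTop_of_monotone (fun a b h => Subtype.coe_le_coe.2 h) hcof
  have htendsto : ∀ x : ↥X', Filter.Tendsto (fun s : ↥S => r' s x) Filter.atTop (nhds x) := by
    intro x
    rw [tendsto_subtype_rng]
    exact (hsk.tendsto_id (x : X)).comp hval
  have hfullness : ∀ x : ↥X', ∃ s : ↥S, x ∈ Set.range (r' s) := by
    intro x
    obtain ⟨s, hs⟩ := hfull (x : X)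
    obtain ⟨s', hs'⟩ := hcof s
    exact ⟨s', ⟨x, Subtype.ext (hsk.fix_of_le hs hs')⟩⟩
  exact ⟨↥S, inferInstance, r',
    ⟨hSne, hSdirected, hcont, hretr, hcomp, hmetr, hcompeq, hseq, htendsto⟩, hfullness⟩


lemma completelyRegularSpace_subtype {X : Type u} [TopologicalSpace X]
    [CompletelyRegularSpace X] (A : Set X) : CompletelyRegularSpace ↥A := by
  constructor
  intro x C hC hx
  obtain ⟨C₀, hC₀, hCeq⟩ := isClosed_induced_iff.mp hC
  have hx0 : (x : X) ∉ C₀ := fun h => hx (by rw [← hCeq]; exact h)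
  obtain ⟨φ, hφ, hφx, hφC⟩ := CompletelyRegularSpace.completely_regular (x : X) C₀ hC₀ hx0
  refine ⟨φ ∘ Subtype.val, hφ.comp continuous_subtype_val, hφx, ?_⟩
  intro y hy
  have hy0 : (y : X) ∈ C₀ := by rw [← hCeq] at hy; exact hy
  exact hφC hy0

end Aux

/-- In a weakly non-commutative Valdivia compact space, the closure of a
union of an arbitrary family of G-delta subsets is weakly non-commutative Valdivia. -/
theorem closure_iUnion_Gdelta_of_weaklyNCValdivia
    {K : Type u} [TopologicalSpace K] [T2Space K]
    (hK : IsWeaklyNCValdivia K) (L : Set K)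
    (hL : ∃ (ι : Type u) (Z : ι → Set K), (∀ i, IsGδ (Z i)) ∧ L = closure (⋃ i, Z i)) :
    IsWeaklyNCValdivia ↥L := by
  classical
  obtain ⟨hKcomp, D, hDdense, hDcc, X, τX, hT2X, hCRX, hNC, f, hfcont, hfsurj⟩ := hK
  haveI := hKcomp
  letI := τX
  haveI := hT2X
  haveI := hCRX
  obtain ⟨ι, Z, hZGδ, hLdef⟩ := hL
  have hLclosed : IsClosed L := by rw [hLdef]; exact isClosed_closure
  haveI : CompactSpace ↥L := isCompact_iff_compactSpace.mp hLclosed.isCompact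
  set g : X → K := fun x => ((f x : ↥D) : K) with hgdef
  have hgcont : Continuous g := continuous_subtype_val.comp hfcont
  have hgD : ∀ x, g x ∈ D := fun x => (f x).2
  set X' : Set X := g ⁻¹' L with hX'def
  have hX'closed : IsClosed X' := hLclosed.preimage hgcont
  set D' : Set ↥L := Subtype.val ⁻¹' D with hD'def
  -- density of D' in L
  have hD'dense : Dense D' := by
    rw [dense_iff_inter_open]
    rintro U hU ⟨u, huU⟩
    obtain ⟨V, hV, hVeq⟩ := isOpen_induced_iff.mp hU
    have huV : (u : K) ∈ V := by rw [← hVeq] at huU; exact huU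
    have huL : (u : K) ∈ closure (⋃ i, Z i) := by rw [← hLdef]; exact u.2
    obtain ⟨p, hpV, hpZ⟩ := mem_closure_iff.mp huL V hV huV
    obtain ⟨i, hpi⟩ := Set.mem_iUnion.1 hpZ
    have hGδ : IsGδ (V ∩ Z i) := hV.isGδ.inter (hZGδ i)
    obtain ⟨d, ⟨hdV, hdZ⟩, hdD⟩ := dense_cc_meets_gdelta hDdense hDcc hGδ ⟨p, hpV, hpi⟩
    have hdL : d ∈ L := by
      rw [hLdef]
      exact subset_closure (Set.mem_iUnion.2 ⟨i, hdZ⟩)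
    refine ⟨⟨d, hdL⟩, ?_, hdD⟩
    rw [← hVeq]
    exact hdV
  -- countable compactness of D'
  have hCclosed : IsClosed (Subtype.val ⁻¹' L : Set ↥D) :=
    hLclosed.preimage continuous_subtype_val
  have hCcc := countablyCompact_subtype_of_isClosed hDcc hCclosed
  have hD'cc : CountablyCompact ↥D' := by
    refine countablyCompact_of_image hCcc
      (φ := fun c : ↥(Subtype.val ⁻¹' L : Set ↥D) =>
        (⟨⟨((c : ↥D) : K), c.2⟩, (c : ↥D).2⟩ : ↥D')) ?_ ?_
    · exact Continuous.subtype_mk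
        (Continuous.subtype_mk (continuous_subtype_val.comp continuous_subtype_val) _) _
    · rintro ⟨⟨k, hkL⟩, hkD⟩
      exact ⟨⟨⟨k, hkD⟩, hkL⟩, rfl⟩
  -- the witness space X'
  obtain ⟨hXcc, Γ, pΓ, r, hsk, hfull⟩ := hNC
  letI := pΓ
  have hskel : HasFullRetractionalSkeleton ↥X' :=
    restricted_full_skeleton hsk hfull hX'closed
  have hX'cc : CountablyCompact ↥X' := countablyCompact_subtype_of_isClosed hXcc hX'closed
  -- the surjection
  set F : ↥X' → ↥D' := fun x => ⟨⟨g (x : X), x.2⟩, hgD (x : X)⟩ with hFdef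
  have hFcont : Continuous F :=
    Continuous.subtype_mk (Continuous.subtype_mk (hgcont.comp continuous_subtype_val) _) _
  have hFsurj : Function.Surjective F := by
    rintro ⟨⟨k, hkL⟩, hkD⟩
    obtain ⟨x, hx⟩ := hfsurj ⟨k, hkD⟩
    have hgx : g x = k := congrArg Subtype.val hx
    refine ⟨⟨x, show g x ∈ L by rw [hgx]; exact hkL⟩, ?_⟩
    apply Subtype.ext
    apply Subtype.ext
    exact hgx
  exact ⟨inferInstance, D', hD'dense, hD'cc, ↥X', inferInstance, inferInstance,
    completelyRegularSpace_subtype X', ⟨hX'cc, hskel⟩, F, hFcont, hFsurj⟩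
end

section
/- Let X be a weakly non-commutative Corson countably compact space. Then the following are equivalent: (1) X is non-commutative Corson (i.e., X admits a full retractional skeleton); (2) X is a Fréchet–Urysohn space; (3) X has countable tightness (for every A ⊆ X and every x in the closure of A there is a countable C ⊆ A with x in the closure of C). -/
open Filter Topology Set

universe u

section Helpers

variable {W : Type u} [TopologicalSpace W] {Γ : Type u} [PartialOrder Γ] {r : Γ → W → W}

namespace IsRetractionalSkeleton

theorem rr (hr : IsRetractionalSkeleton r) (s : Γ) (w : W) : r s (r s w) = r s w :=
  congrFun (hr.retraction s) w

theorem later_first (hr : IsRetractionalSkeleton r) {s t : Γ} (h : s ≤ t) (w : W) :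
    r t (r s w) = r s w := congrFun (hr.comp_eq_of_le s t h).1 w

theorem first_later (hr : IsRetractionalSkeleton r) {s t : Γ} (h : s ≤ t) (w : W) :
    r s (r t w) = r s w := congrFun (hr.comp_eq_of_le s t h).2 w

theorem fix_mono (hr : IsRetractionalSkeleton r) {s t : Γ} (h : s ≤ t) {w : W}
    (hw : r s w = w) : r t w = w := by
  conv_lhs => rw [← hw]
  rw [hr.later_first h, hw]

theorem mem_range_iff (hr : IsRetractionalSkeleton r) {s : Γ} {w : W} :
    w ∈ Set.range (r s) ↔ r s w = w := by
  constructor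
  · rintro ⟨z, rfl⟩; exact hr.rr s z
  · intro h; exact ⟨w, h⟩

theorem range_mono (hr : IsRetractionalSkeleton r) {s t : Γ} (h : s ≤ t) :
    Set.range (r s) ⊆ Set.range (r t) := by
  rintro w hw
  exact hr.mem_range_iff.mpr (hr.fix_mono h (hr.mem_range_iff.mp hw))

/-- Absorption of a countable set into a single range, above a given index. -/
theorem absorb [T2Space W] (hr : IsRetractionalSkeleton r)
    (hfull : ∀ w : W, ∃ s, r s w = w) (P : Set W) (hP : P.Countable) (s₀ : Γ) :
    ∃ t, s₀ ≤ t ∧ ∀ p ∈ P, r t p = p := by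
  rcases P.eq_empty_or_nonempty with hE | hNE
  · exact ⟨s₀, le_refl _, by simp [hE]⟩
  obtain ⟨e, he⟩ := hP.exists_eq_range hNE
  have hidx : ∀ n : ℕ, ∃ s, r s (e n) = e n := fun n => hfull (e n)
  choose idx hidxe using hidx
  have hub : ∀ a b : Γ, ∃ w, a ≤ w ∧ b ≤ w := hr.directed
  choose ub hub1 hub2 using hub
  -- chain
  let c : ℕ → Γ := fun n => Nat.rec (ub s₀ (idx 0)) (fun n cn => ub cn (idx (n+1))) n
  have hc0 : c 0 = ub s₀ (idx 0) := rfl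
  have hcs : ∀ n, c (n+1) = ub (c n) (idx (n+1)) := fun n => rfl
  have hmono : Monotone c := monotone_nat_of_le_succ (fun n => by rw [hcs]; exact hub1 _ _)
  have hidxle : ∀ n, idx n ≤ c n := by
    intro n; cases n with
    | zero => rw [hc0]; exact hub2 _ _
    | succ m => rw [hcs]; exact hub2 _ _
  obtain ⟨t, hlub, htend⟩ := hr.seq_sup c hmono
  refine ⟨t, ?_, ?_⟩
  · exact le_trans (by rw [hc0]; exact hub1 _ _) (hlub.1 (Set.mem_range_self 0))
  · intro p hp
    rw [he] at hp
    obtain ⟨n, rfl⟩ := hp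
    have hconst : (fun m => r (c m) (e n)) =ᶠ[atTop] fun _ => e n := by
      filter_upwards [Filter.eventually_ge_atTop n] with m hm
      exact hr.fix_mono (le_trans (hidxle n) (hmono hm)) (hidxe n)
    exact tendsto_nhds_unique (htend (e n)) (tendsto_const_nhds.congr' hconst.symm)

end IsRetractionalSkeleton

/-- Uniform convergence of commuting retractions on a compact metric space. -/
theorem unifConv {K : Type*} [MetricSpace K] [CompactSpace K] (π : ℕ → K → K)
    (hcont : ∀ n, Continuous (π n))
    (hcomp : ∀ m n, m ≤ n → ∀ z, π m (π n z) = π m z)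
    (hpt : ∀ z : K, Tendsto (fun n => π n z) atTop (𝓝 z)) :
    ∀ ε > (0:ℝ), ∃ N, ∀ n ≥ N, ∀ z : K, dist (π n z) z < ε := by
  intro ε hε
  by_contra hcon
  push_neg at hcon
  -- build a strictly monotone sequence of bad indices
  have hstep : ∀ N : ℕ, ∃ n ≥ N, ∃ z : K, ε ≤ dist (π n z) z := by
    intro N
    obtain ⟨n, hn, z, hz⟩ := hcon N
    exact ⟨n, hn, z, hz⟩
  choose nn hnn zz hzz using hstep
  -- iterated: G j = j-th bad stage
  let G : ℕ → ℕ := fun j => Nat.rec 0 (fun _ prev => nn prev + 1) j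
  have hGs : ∀ j, G (j+1) = nn (G j) + 1 := fun j => rfl
  set idx : ℕ → ℕ := fun j => nn (G j) with hidx
  have hidxmono : StrictMono idx := strictMono_nat_of_lt_succ (fun j => by
    have h1 : idx j < G (j+1) := by rw [hGs]; exact Nat.lt_succ_self _
    exact lt_of_lt_of_le h1 (hnn _))
  set x : ℕ → K := fun j => zz (G j) with hx
  have hbad : ∀ j, ε ≤ dist (π (idx j) (x j)) (x j) := fun j => hzz (G j)
  obtain ⟨a, _, φ, hφ, hxa⟩ := isCompact_univ.tendsto_subseq (x := x) (fun n => Set.mem_univ _)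
  set y : ℕ → K := fun j => π (idx (φ j)) (x (φ j)) with hy
  obtain ⟨b, _, ψ, hψ, hyb⟩ := isCompact_univ.tendsto_subseq (x := y) (fun n => Set.mem_univ _)
  have hxab : Tendsto (fun j => x (φ (ψ j))) atTop (𝓝 a) := hxa.comp hψ.tendsto_atTop
  have hybb : Tendsto (fun j => y (ψ j)) atTop (𝓝 b) := hyb
  -- dist a b ≥ ε
  have hdist : ε ≤ dist b a := by
    have h1 : Tendsto (fun j => dist (y (ψ j)) (x (φ (ψ j)))) atTop (𝓝 (dist b a)) :=
      hybb.dist hxab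
    refine ge_of_tendsto h1 ?_
    filter_upwards with j
    exact hbad (φ (ψ j))
  -- for every m, π m b = π m a
  have hπeq : ∀ m, π m b = π m a := by
    intro m
    have hge : ∀ᶠ j in atTop, m ≤ idx (φ (ψ j)) := by
      have : Tendsto (fun j => idx (φ (ψ j))) atTop atTop :=
        (hidxmono.comp (hφ.comp hψ)).tendsto_atTop
      exact this.eventually_ge_atTop m
    have h1 : Tendsto (fun j => π m (y (ψ j))) atTop (𝓝 (π m b)) :=
      ((hcont m).tendsto b).comp hybb
    have h2 : Tendsto (fun j => π m (x (φ (ψ j)))) atTop (𝓝 (π m a)) :=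
      ((hcont m).tendsto a).comp hxab
    have heq : (fun j => π m (y (ψ j))) =ᶠ[atTop] (fun j => π m (x (φ (ψ j)))) := by
      filter_upwards [hge] with j hj
      exact hcomp m _ hj _
    exact tendsto_nhds_unique (h1.congr' heq) h2
  have hab : b = a := by
    have h1 : Tendsto (fun m => π m b) atTop (𝓝 b) := hpt b
    have h2 : Tendsto (fun m => π m b) atTop (𝓝 a) := by
      have : (fun m => π m b) = fun m => π m a := funext hπeq
      rw [this]; exact hpt a
    exact tendsto_nhds_unique h1 h2
  rw [hab] at hdist
  simp at hdist
  exact absurd hdist (not_le.mpr hε)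

end Helpers

section Helpers2

variable {W : Type u} [TopologicalSpace W] {Γ : Type u} [PartialOrder Γ] {r : Γ → W → W}

/-- A subtype-second-countable set contains a countable subset dense in it. -/
theorem exists_countable_dense_subset_of_sc {Z : Type*} [TopologicalSpace Z] (T : Set Z)
    (hT : SecondCountableTopology ↥T) :
    ∃ D, D ⊆ T ∧ D.Countable ∧ T ⊆ closure D := by
  haveI := hT
  obtain ⟨D₀, hc, hd⟩ := TopologicalSpace.exists_countable_dense ↥T
  refine ⟨Subtype.val '' D₀, ?_, hc.image _, ?_⟩
  · rintro z ⟨w, _, rfl⟩; exact w.2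
  · intro z hz
    have h1 : (⟨z, hz⟩ : ↥T) ∈ closure D₀ := by rw [hd.closure_eq]; trivial
    have h2 := image_closure_subset_closure_image (f := (Subtype.val : ↥T → Z))
      continuous_subtype_val (s := D₀)
    exact h2 ⟨⟨z, hz⟩, h1, rfl⟩

namespace IsRetractionalSkeleton

theorem sc_range (hr : IsRetractionalSkeleton r) (s : Γ) :
    SecondCountableTopology ↥(Set.range (r s)) := by
  haveI := hr.metrizable_range s
  letI := TopologicalSpace.metrizableSpaceMetric ↥(Set.range (r s))
  haveI : CompactSpace ↥(Set.range (r s)) := isCompact_iff_compactSpace.mp (hr.compact_range s)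
  infer_instance

/-- countable subset of `A` whose image under `r s` is dense in `r s '' A`. -/
theorem dense_lift (hr : IsRetractionalSkeleton r) (s : Γ) (A : Set W) :
    ∃ C, C ⊆ A ∧ C.Countable ∧ (r s '' A) ⊆ closure (r s '' C) := by
  set T : Set W := r s '' A with hT
  have hmem : ∀ x : ↥T, (x : W) ∈ Set.range (r s) := by
    rintro ⟨x, a, ha, rfl⟩; exact ⟨a, rfl⟩
  set j : ↥T → ↥(Set.range (r s)) := fun x => ⟨(x : W), hmem x⟩ with hj
  have hjcont : Continuous j := continuous_subtype_val.subtype_mk _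
  have hjind : Topology.IsInducing j := by
    refine Topology.IsInducing.of_comp hjcont continuous_subtype_val ?_
    have : (Subtype.val ∘ j) = (Subtype.val : ↥T → W) := rfl
    rw [this]
    exact Topology.IsInducing.subtypeVal
  haveI := hr.sc_range s
  haveI := hjind.secondCountableTopology
  obtain ⟨D, hDT, hDc, hDd⟩ := exists_countable_dense_subset_of_sc T inferInstance
  have hch : ∀ d : ↥D, ∃ a, a ∈ A ∧ r s a = (d : W) := by
    rintro ⟨d, hd⟩
    obtain ⟨a, ha, hra⟩ := hDT hd
    exact ⟨a, ha, hra⟩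
  choose φ hφA hφr using hch
  haveI : Countable ↥D := hDc.to_subtype
  refine ⟨Set.range φ, ?_, Set.countable_range _, ?_⟩
  · rintro a ⟨d, rfl⟩; exact hφA d
  · refine subset_trans hDd (closure_mono ?_)
    rintro d hd
    exact ⟨φ ⟨d, hd⟩, ⟨⟨d, hd⟩, rfl⟩, hφr ⟨d, hd⟩⟩

/-- countable subset of a pair set `P` whose pair-image under `r s` is dense. -/
theorem dense_lift_pairs (hr : IsRetractionalSkeleton r) (s : Γ) (P : Set (W × W)) :
    ∃ Q, Q ⊆ P ∧ Q.Countable ∧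
      ((fun p : W × W => (r s p.1, r s p.2)) '' P) ⊆
        closure ((fun p : W × W => (r s p.1, r s p.2)) '' Q) := by
  set φf : W × W → W × W := fun p => (r s p.1, r s p.2) with hφf
  set T : Set (W × W) := φf '' P with hT
  have hmem1 : ∀ x : ↥T, (x : W × W).1 ∈ Set.range (r s) := by
    rintro ⟨x, p, hp, rfl⟩; exact ⟨p.1, rfl⟩
  have hmem2 : ∀ x : ↥T, (x : W × W).2 ∈ Set.range (r s) := by
    rintro ⟨x, p, hp, rfl⟩; exact ⟨p.2, rfl⟩
  set j : ↥T → ↥(Set.range (r s)) × ↥(Set.range (r s)) :=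
    fun x => (⟨(x : W × W).1, hmem1 x⟩, ⟨(x : W × W).2, hmem2 x⟩) with hj
  have hjcont : Continuous j := by
    refine Continuous.prodMk ?_ ?_
    · exact (continuous_fst.comp continuous_subtype_val).subtype_mk _
    · exact (continuous_snd.comp continuous_subtype_val).subtype_mk _
  have hjind : Topology.IsInducing j := by
    refine Topology.IsInducing.of_comp hjcont
      ((Topology.IsInducing.subtypeVal).prodMap (Topology.IsInducing.subtypeVal)).continuous ?_
    have : ((Prod.map (Subtype.val : ↥(Set.range (r s)) → W) Subtype.val) ∘ j)
        = (Subtype.val : ↥T → W × W) := rfl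
    rw [this]
    exact Topology.IsInducing.subtypeVal
  haveI := hr.sc_range s
  haveI := hjind.secondCountableTopology
  obtain ⟨D, hDT, hDc, hDd⟩ := exists_countable_dense_subset_of_sc T inferInstance
  have hch : ∀ d : ↥D, ∃ p, p ∈ P ∧ φf p = (d : W × W) := by
    rintro ⟨d, hd⟩
    obtain ⟨p, hp, hpd⟩ := hDT hd
    exact ⟨p, hp, hpd⟩
  choose ρ hρP hρr using hch
  haveI : Countable ↥D := hDc.to_subtype
  refine ⟨Set.range ρ, ?_, Set.countable_range _, ?_⟩
  · rintro p ⟨d, rfl⟩; exact hρP d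
  · refine subset_trans hDd (closure_mono ?_)
    rintro d hd
    exact ⟨ρ ⟨d, hd⟩, ⟨⟨d, hd⟩, rfl⟩, hρr ⟨d, hd⟩⟩

end IsRetractionalSkeleton

end Helpers2

section Core

/-- Core approximation lemma, single points. -/
theorem core_single {K : Type*} [t : TopologicalSpace K] [CompactSpace K]
    [h : TopologicalSpace.MetrizableSpace K] (π : ℕ → K → K)
    (hcont : ∀ n, Continuous (π n))
    (hcomp : ∀ m n, m ≤ n → ∀ z, π m (π n z) = π m z)
    (hpt : ∀ z : K, Tendsto (fun n => π n z) atTop (𝓝 z))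
    (u : ℕ → K) (za : K) (hu : Tendsto u atTop (𝓝 za))
    (CK : Set K) (hdense : ∀ n, u n ∈ closure (π n '' CK)) :
    za ∈ closure CK := by
  letI := TopologicalSpace.metrizableSpaceMetric K
  have hunif := unifConv π hcont hcomp hpt
  rw [Metric.mem_closure_iff]
  intro ε hε
  obtain ⟨N1, hN1⟩ := hunif (ε/3) (by linarith)
  obtain ⟨N2, hN2⟩ := (Metric.tendsto_atTop.mp hu) (ε/3) (by linarith)
  set n := max N1 N2 with hn
  have h1 : dist (u n) za < ε/3 := hN2 n (le_max_right _ _)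
  obtain ⟨_, ⟨b, hb, rfl⟩, h2⟩ := Metric.mem_closure_iff.mp (hdense n) (ε/3) (by linarith)
  refine ⟨b, hb, ?_⟩
  have h3 : dist (π n b) b < ε/3 := hN1 n (le_max_left _ _) b
  have h4 : dist za b ≤ dist za (u n) + dist (u n) (π n b) + dist (π n b) b :=
    dist_triangle4 _ _ _ _
  rw [dist_comm za (u n)] at h4
  linarith

/-- Core approximation lemma, pairs. -/
theorem core_pair {K : Type*} [t : TopologicalSpace K] [CompactSpace K]
    [h : TopologicalSpace.MetrizableSpace K] (π : ℕ → K → K)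
    (hcont : ∀ n, Continuous (π n))
    (hcomp : ∀ m n, m ≤ n → ∀ z, π m (π n z) = π m z)
    (hpt : ∀ z : K, Tendsto (fun n => π n z) atTop (𝓝 z))
    (u v : ℕ → K) (za zb : K) (hu : Tendsto u atTop (𝓝 za)) (hv : Tendsto v atTop (𝓝 zb))
    (R : Set (K × K))
    (hdense : ∀ n, (u n, v n) ∈ closure ((fun p : K × K => (π n p.1, π n p.2)) '' R)) :
    (za, zb) ∈ closure R := by
  letI := TopologicalSpace.metrizableSpaceMetric K
  have hunif := unifConv π hcont hcomp hpt
  have key : ∀ ε > (0:ℝ), ∃ p ∈ R, dist p.1 za < ε ∧ dist p.2 zb < ε := by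
    intro ε hε
    obtain ⟨N1, hN1⟩ := hunif (ε/3) (by linarith)
    obtain ⟨N2, hN2⟩ := (Metric.tendsto_atTop.mp hu) (ε/3) (by linarith)
    obtain ⟨N3, hN3⟩ := (Metric.tendsto_atTop.mp hv) (ε/3) (by linarith)
    set n := max N1 (max N2 N3) with hn
    have h1 : dist (u n) za < ε/3 := hN2 n (le_trans (le_max_left _ _) (le_max_right _ _))
    have h2 : dist (v n) zb < ε/3 := hN3 n (le_trans (le_max_right _ _) (le_max_right _ _))
    have hball : (Metric.ball (u n) (ε/3)) ×ˢ (Metric.ball (v n) (ε/3)) ∈ 𝓝 (u n, v n) :=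
      prod_mem_nhds (Metric.ball_mem_nhds _ (by linarith)) (Metric.ball_mem_nhds _ (by linarith))
    obtain ⟨q, hq1, hq2⟩ := mem_closure_iff_nhds.mp (hdense n) _ hball
    obtain ⟨p, hp, rfl⟩ := hq2
    refine ⟨p, hp, ?_, ?_⟩
    · have h3 : dist (π n p.1) (u n) < ε/3 := by
        have := hq1.1; rwa [Metric.mem_ball] at this
      have h4 : dist (π n p.1) p.1 < ε/3 := hN1 n (le_max_left _ _) p.1
      have h5 : dist p.1 za ≤ dist p.1 (π n p.1) + dist (π n p.1) (u n) + dist (u n) za :=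
        dist_triangle4 _ _ _ _
      rw [dist_comm p.1 (π n p.1)] at h5
      linarith
    · have h3 : dist (π n p.2) (v n) < ε/3 := by
        have := hq1.2; rwa [Metric.mem_ball] at this
      have h4 : dist (π n p.2) p.2 < ε/3 := hN1 n (le_max_left _ _) p.2
      have h5 : dist p.2 zb ≤ dist p.2 (π n p.2) + dist (π n p.2) (v n) + dist (v n) zb :=
        dist_triangle4 _ _ _ _
      rw [dist_comm p.2 (π n p.2)] at h5
      linarith
  rw [mem_closure_iff_nhds]
  intro T hT
  rw [mem_nhds_prod_iff] at hT
  obtain ⟨U, hU, V, hV, hUV⟩ := hT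
  obtain ⟨ε1, hε1, hbU⟩ := Metric.mem_nhds_iff.mp hU
  obtain ⟨ε2, hε2, hbV⟩ := Metric.mem_nhds_iff.mp hV
  obtain ⟨p, hp, hp1, hp2⟩ := key (min ε1 ε2) (lt_min hε1 hε2)
  refine ⟨p, hUV ?_, hp⟩
  constructor
  · exact hbU (by rw [Metric.mem_ball, dist_comm] at *; exact lt_of_lt_of_le hp1 (min_le_left _ _))
  · exact hbV (by rw [Metric.mem_ball, dist_comm] at *; exact lt_of_lt_of_le hp2 (min_le_right _ _))

end Core

section OneToThree

/-- A space with a full retractional skeleton has countable tightness. -/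
theorem tight_of_full {Y : Type u} [TopologicalSpace Y] [T2Space Y]
    (h : HasFullRetractionalSkeleton Y) :
    ∀ A : Set Y, ∀ x ∈ closure A, ∃ C ⊆ A, C.Countable ∧ x ∈ closure C := by
  obtain ⟨Γ, _po, r, hr, hfull⟩ := h
  have hfix : ∀ w, ∃ s, r s w = w := fun w => (hfull w).imp (fun s hs => hr.mem_range_iff.mp hs)
  intro A x hx
  obtain ⟨s₀, hs₀⟩ := hfix x
  have hC : ∀ s : Γ, ∃ C, C ⊆ A ∧ C.Countable ∧ (r s '' A) ⊆ closure (r s '' C) :=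
    fun s => hr.dense_lift s A
  choose Cf hCfA hCfc hCfd using hC
  have hstep : ∀ s : Γ, ∃ t, s ≤ t ∧ ∀ p ∈ Cf s, r t p = p :=
    fun s => hr.absorb hfix (Cf s) (hCfc s) s
  choose st hst1 hst2 using hstep
  let c : ℕ → Γ := fun n => Nat.rec s₀ (fun _ prev => st prev) n
  have hc0 : c 0 = s₀ := rfl
  have hcs : ∀ n, c (n+1) = st (c n) := fun n => rfl
  have hmono : Monotone c := monotone_nat_of_le_succ (fun n => by rw [hcs]; exact hst1 _)
  obtain ⟨t, hlub, htend⟩ := hr.seq_sup c hmono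
  have hct : ∀ n, c n ≤ t := fun n => hlub.1 (Set.mem_range_self n)
  have hxfix : ∀ n, r (c n) x = x := fun n =>
    hr.fix_mono (show s₀ ≤ c n from hc0 ▸ hmono (Nat.zero_le n)) hs₀
  have hxt : r t x = x := by
    have h1 := htend x
    have h2 : (fun n => r (c n) x) = fun _ => x := funext hxfix
    rw [h2] at h1
    exact tendsto_nhds_unique h1 tendsto_const_nhds
  set C : Set Y := ⋃ n, Cf (c n) with hCdef
  have hCA : C ⊆ A := Set.iUnion_subset (fun n => hCfA (c n))
  have hCc : C.Countable := Set.countable_iUnion (fun n => hCfc (c n))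
  have hCfixt : ∀ w ∈ C, r t w = w := by
    intro w hw
    obtain ⟨n, hn⟩ := Set.mem_iUnion.mp hw
    have hker : ∀ m, n + 1 ≤ m → r (c m) w = w := fun m hm =>
      hr.fix_mono (hmono hm) (by rw [hcs]; exact hst2 (c n) w hn)
    have h1 := htend w
    have h2 : (fun m => r (c m) w) =ᶠ[atTop] fun _ => w := by
      filter_upwards [Filter.eventually_ge_atTop (n+1)] with m hm
      exact hker m hm
    exact tendsto_nhds_unique h1 (tendsto_const_nhds.congr' h2.symm)
  haveI hmz := hr.metrizable_range t
  haveI : CompactSpace ↥(Set.range (r t)) := isCompact_iff_compactSpace.mp (hr.compact_range t)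
  set K := ↥(Set.range (r t)) with hK
  have hmemE : ∀ (n : ℕ) (z : Y), r (c n) z ∈ Set.range (r t) :=
    fun n z => hr.range_mono (hct n) ⟨z, rfl⟩
  set π : ℕ → K → K := fun n z => ⟨r (c n) (z : Y), hmemE n (z : Y)⟩ with hπ
  have hπcont : ∀ n, Continuous (π n) :=
    fun n => ((hr.continuous (c n)).comp continuous_subtype_val).subtype_mk _
  have hπcomp : ∀ m n, m ≤ n → ∀ z, π m (π n z) = π m z := by
    intro m n hmn z
    apply Subtype.ext
    exact hr.first_later (hmono hmn) (z : Y)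
  have hπpt : ∀ z : K, Tendsto (fun n => π n z) atTop (𝓝 z) := by
    intro z
    rw [tendsto_subtype_rng]
    have h1 := htend (z : Y)
    rwa [hr.mem_range_iff.mp z.2] at h1
  set CK : Set K := {z : K | (z : Y) ∈ C} with hCK
  have hmain : r t '' A ⊆ closure C := by
    rintro _ ⟨a, ha, rfl⟩
    set za : K := ⟨r t a, ⟨a, rfl⟩⟩ with hza
    set ua : ℕ → K := fun n => ⟨r (c n) a, hmemE n a⟩ with hua
    have htendK : Tendsto ua atTop (𝓝 za) := by
      rw [tendsto_subtype_rng]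
      exact htend a
    have hdense : ∀ n, ua n ∈ closure (π n '' CK) := by
      intro n
      rw [closure_subtype]
      have h1 : r (c n) a ∈ closure (r (c n) '' Cf (c n)) := hCfd (c n) ⟨a, ha, rfl⟩
      refine closure_mono ?_ h1
      rintro _ ⟨c', hc', rfl⟩
      have hc'C : c' ∈ C := Set.mem_iUnion.mpr ⟨n, hc'⟩
      have hc'K : c' ∈ Set.range (r t) := hr.mem_range_iff.mpr (hCfixt c' hc'C)
      exact ⟨π n ⟨c', hc'K⟩, ⟨⟨c', hc'K⟩, hc'C, rfl⟩, rfl⟩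
    have hzaK : za ∈ closure CK :=
      core_single π hπcont hπcomp hπpt ua za htendK CK hdense
    rw [closure_subtype] at hzaK
    refine closure_mono ?_ hzaK
    rintro _ ⟨z, hz, rfl⟩
    exact hz
  refine ⟨C, hCA, hCc, ?_⟩
  have h6 : x ∈ closure (r t '' A) := by
    have h7 : r t x ∈ r t '' closure A := ⟨x, hx, rfl⟩
    rw [hxt] at h7
    exact image_closure_subset_closure_image (hr.continuous t) h7
  have h8 : closure (r t '' A) ⊆ closure C := by
    rw [← closure_closure (s := C)]
    exact closure_mono hmain
  exact h8 h6

end OneToThree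

section ImageMetrizable

/-- The continuous image of a compact second countable space in a T2 space is
second countable. -/
theorem secondCountable_image_of_compact {K Z : Type*} [TopologicalSpace K]
    [TopologicalSpace Z] [CompactSpace K] [SecondCountableTopology K] [T2Space Z]
    (f : K → Z) (hf : Continuous f) (hsurj : Function.Surjective f) :
    SecondCountableTopology Z := by
  obtain ⟨b, hbc, _, hbasis⟩ := TopologicalSpace.exists_countable_basis K
  set B' : Set (Set K) := (fun F => ⋃₀ F) '' {F | F.Finite ∧ F ⊆ b} with hB'
  have hB'c : B'.Countable := (Set.countable_setOf_finite_subset hbc).image _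
  set Bz : Set (Set Z) := (fun U => (f '' Uᶜ)ᶜ) '' B' with hBz
  have hBzc : Bz.Countable := hB'c.image _
  have hB'open : ∀ U ∈ B', IsOpen U := by
    rintro _ ⟨F, ⟨hFf, hFb⟩, rfl⟩
    exact isOpen_sUnion (fun u hu => hbasis.isOpen (hFb hu))
  have hBzopen : ∀ V ∈ Bz, IsOpen V := by
    rintro _ ⟨U, hU, rfl⟩
    have h1 : IsCompact (Uᶜ) := (isClosed_compl_iff.mpr (hB'open U hU)).isCompact
    exact isOpen_compl_iff.mpr (h1.image hf).isClosed
  refine TopologicalSpace.IsTopologicalBasis.secondCountableTopology ?_ hBzc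
  refine TopologicalSpace.isTopologicalBasis_of_isOpen_of_nhds hBzopen ?_
  intro a V haV hV
  -- finite subcover of the fiber by basic sets inside f ⁻¹' V
  set fib : Set K := f ⁻¹' {a} with hfib
  have hfibc : IsCompact fib := (isClosed_singleton.preimage hf).isCompact
  have hcov : fib ⊆ ⋃ i : {u : Set K // u ∈ b ∧ u ⊆ f ⁻¹' V}, (i : Set K) := by
    intro k hk
    have hkV : k ∈ f ⁻¹' V := by
      simp only [Set.mem_preimage]
      rw [Set.mem_preimage, Set.mem_singleton_iff] at hk
      rw [hk]; exact haV
    obtain ⟨u, hub, hku, huV⟩ := hbasis.exists_subset_of_mem_open hkV (hV.preimage hf)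
    exact Set.mem_iUnion.mpr ⟨⟨u, hub, huV⟩, hku⟩
  obtain ⟨T, hT⟩ := hfibc.elim_finite_subcover _ (fun i => hbasis.isOpen i.2.1) hcov
  set F : Set (Set K) := {u | ∃ i ∈ T, (i : {u : Set K // u ∈ b ∧ u ⊆ f ⁻¹' V}).val = u} with hF
  have hFfin : F.Finite := by
    have : F ⊆ Subtype.val '' (T : Set {u : Set K // u ∈ b ∧ u ⊆ f ⁻¹' V}) := by
      rintro u ⟨i, hi, rfl⟩; exact ⟨i, hi, rfl⟩
    exact Set.Finite.subset (T.finite_toSet.image _) this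
  have hFb : F ⊆ b := by rintro _ ⟨i, _, rfl⟩; exact i.2.1
  set U : Set K := ⋃₀ F with hU
  have hUB' : U ∈ B' := by exact Set.mem_image_of_mem _ ⟨hFfin, hFb⟩
  have hfibU : fib ⊆ U := by
    intro k hk
    obtain ⟨i, hi, hki⟩ := Set.mem_iUnion₂.mp (hT hk)
    exact ⟨i.val, ⟨i, hi, rfl⟩, hki⟩
  have hUV : U ⊆ f ⁻¹' V := by
    rintro k ⟨u, ⟨i, _, rfl⟩, hku⟩
    exact i.2.2 hku
  refine ⟨(f '' Uᶜ)ᶜ, ⟨U, hUB', rfl⟩, ?_, ?_⟩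
  · intro hmem
    obtain ⟨k, hk, hka⟩ := hmem
    exact hk (hfibU (by rw [hfib, Set.mem_preimage, hka]; rfl))
  · intro z hz
    obtain ⟨k, rfl⟩ := hsurj z
    by_cases hkU : k ∈ U
    · exact hUV hkU
    · exact absurd ⟨k, hkU, rfl⟩ hz

/-- The continuous image of a compact metrizable set in a T2 space is metrizable. -/
theorem metrizable_image_of_compact {W X : Type*} [TopologicalSpace W] [TopologicalSpace X]
    [T2Space X] (E : Set W) (hE : IsCompact E)
    (hme : TopologicalSpace.MetrizableSpace ↥E) (g : W → X) (hg : Continuous g) :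
    TopologicalSpace.MetrizableSpace ↥(g '' E) := by
  haveI : CompactSpace ↥E := isCompact_iff_compactSpace.mp hE
  haveI : CompactSpace ↥(g '' E) := isCompact_iff_compactSpace.mp (hE.image hg)
  haveI : SecondCountableTopology ↥E := by
    letI := TopologicalSpace.metrizableSpaceMetric ↥E
    infer_instance
  set gg : ↥E → ↥(g '' E) := fun k => ⟨g k, Set.mem_image_of_mem g k.2⟩ with hgg
  have hggc : Continuous gg := (hg.comp continuous_subtype_val).subtype_mk _
  have hggs : Function.Surjective gg := by
    rintro ⟨_, k, hk, rfl⟩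
    exact ⟨⟨k, hk⟩, rfl⟩
  haveI := secondCountable_image_of_compact gg hggc hggs
  exact TopologicalSpace.metrizableSpace_of_t3_secondCountable ↥(g '' E)

end ImageMetrizable

section ThreeToTwo

/-- A weakly non-commutative Corson countably compact space with countable tightness
is Fréchet–Urysohn. -/
theorem fu_of_tight {X : Type u} [TopologicalSpace X] [T2Space X] (hX : IsWeaklyNCCorson X)
    (h3 : ∀ A : Set X, ∀ x ∈ closure A, ∃ C ⊆ A, C.Countable ∧ x ∈ closure C) :
    FrechetUrysohnSpace X := by
  obtain ⟨hXcc, W, _tW, _t2W, _crW, ⟨hWcc, ⟨Γ, _po, r, hr, hfull⟩⟩, g, hgc, hgs⟩ := hX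
  have hfix : ∀ w, ∃ s, r s w = w := fun w => (hfull w).imp (fun s hs => hr.mem_range_iff.mp hs)
  constructor
  intro A x hx
  obtain ⟨C, hCA, hCc, hxC⟩ := h3 A x hx
  set σ : X → W := Function.surjInv hgs with hσ
  have hgσ : ∀ y, g (σ y) = y := fun y => Function.surjInv_eq hgs y
  set B : Set W := σ '' C with hB
  obtain ⟨t, _, habs⟩ := hr.absorb hfix B (hCc.image _) hr.nonempty.some
  set K : Set X := g '' Set.range (r t) with hKdef
  have hKc : IsCompact K := (hr.compact_range t).image hgc
  have hCK : C ⊆ K := by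
    intro c hc
    have h1 : r t (σ c) = σ c := habs (σ c) ⟨c, hc, rfl⟩
    exact ⟨σ c, ⟨σ c, h1⟩, hgσ c⟩
  have hxK : x ∈ K := by
    have := closure_mono hCK hxC
    rwa [hKc.isClosed.closure_eq] at this
  haveI : TopologicalSpace.MetrizableSpace ↥K :=
    metrizable_image_of_compact _ (hr.compact_range t) (hr.metrizable_range t) g hgc
  have hsub : (⟨x, hxK⟩ : ↥K) ∈ closure (Subtype.val ⁻¹' C) := by
    rw [closure_subtype]
    rw [Subtype.image_preimage_coe]
    rwa [Set.inter_eq_self_of_subset_right hCK]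
  obtain ⟨cs, hcs, hcst⟩ := mem_closure_iff_seq_limit.mp hsub
  refine ⟨fun n => (cs n : X), fun n => hCA (hcs n), ?_⟩
  have := (continuous_subtype_val.tendsto (⟨x, hxK⟩ : ↥K)).comp hcst
  exact this

end ThreeToTwo

section ClosedMap

/-- In a countably compact space, every sequence has a cluster point. -/
theorem exists_clusterPt_of_cc {W : Type u} [TopologicalSpace W] (hcc : CountablyCompact W)
    (x : ℕ → W) : ∃ z, ∀ N : ℕ, z ∈ closure {w | ∃ n, N ≤ n ∧ x n = w} := by
  by_contra hcon
  push_neg at hcon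
  set U : ℕ → Set W := fun N => (closure {w | ∃ n, N ≤ n ∧ x n = w})ᶜ with hU
  have hUopen : ∀ N, IsOpen (U N) := fun N => isOpen_compl_iff.mpr isClosed_closure
  have hUcov : (⋃ N, U N) = Set.univ := by
    ext z
    simp only [Set.mem_iUnion, Set.mem_univ, iff_true]
    obtain ⟨N, hN⟩ := hcon z
    exact ⟨N, hN⟩
  obtain ⟨T, hT⟩ := hcc U hUopen hUcov
  set M : ℕ := T.sup id with hM
  have hUmono : ∀ N ∈ T, U N ⊆ U M := by
    intro N hN
    apply Set.compl_subset_compl.mpr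
    apply closure_mono
    rintro w ⟨n, hn, rfl⟩
    exact ⟨n, le_trans (Finset.le_sup (f := id) hN) hn, rfl⟩
  have hxM : x M ∈ ⋃ N ∈ T, U N := by rw [hT]; trivial
  obtain ⟨N, hN, hxU⟩ := Set.mem_iUnion₂.mp hxM
  have : x M ∈ U M := hUmono N hN hxU
  exact this (subset_closure ⟨M, le_refl _, rfl⟩)

/-- A continuous map from a countably compact space to a sequential T2 space is closed. -/
theorem isClosedMap_of_cc {W X : Type u} [TopologicalSpace W] [TopologicalSpace X]
    [T2Space X] [SequentialSpace X] (hcc : CountablyCompact W) (g : W → X)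
    (hgc : Continuous g) : IsClosedMap g := by
  intro F hF
  apply IsSeqClosed.isClosed
  intro y p hy hp
  have hch : ∀ n, ∃ w, w ∈ F ∧ g w = y n := fun n => hy n
  choose w hwF hwg using hch
  obtain ⟨z, hz⟩ := exists_clusterPt_of_cc hcc w
  have hzF : z ∈ F := by
    have h1 : {w' | ∃ n, 0 ≤ n ∧ w n = w'} ⊆ F := by
      rintro _ ⟨n, _, rfl⟩; exact hwF n
    have := closure_mono h1 (hz 0)
    rwa [hF.closure_eq] at this
  have hgz : g z = p := by
    by_contra hne
    obtain ⟨U, V, hUo, hVo, hU, hV, hdisj⟩ := t2_separation hne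
    have hev : ∀ᶠ n in atTop, y n ∈ V := hp (hVo.mem_nhds hV)
    obtain ⟨N, hN⟩ := Filter.eventually_atTop.mp hev
    have hnbh : g ⁻¹' U ∈ 𝓝 z := hgc.continuousAt.preimage_mem_nhds (hUo.mem_nhds hU)
    obtain ⟨_, hwu, n, hn, rfl⟩ := mem_closure_iff_nhds.mp (hz N) _ hnbh
    have h2 : y n ∈ U := by rw [← hwg n]; exact hwu
    exact Set.disjoint_iff.mp hdisj ⟨h2, hN n hn⟩ 
  exact ⟨z, hzF, hgz⟩

/-- Continuity through a surjective closed map. -/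
theorem continuous_of_comp_closed {W X Z : Type u} [TopologicalSpace W] [TopologicalSpace X]
    [TopologicalSpace Z] (g : W → X) (hgs : Function.Surjective g) (hgcl : IsClosedMap g)
    (q : X → Z) (h : Continuous (fun w => q (g w))) : Continuous q := by
  rw [continuous_iff_isClosed]
  intro C hC
  have h1 : IsClosed (g ⁻¹' (q ⁻¹' C)) := hC.preimage h
  have h2 := hgcl _ h1
  rwa [Set.image_preimage_eq (q ⁻¹' C) hgs] at h2

end ClosedMap

section Cofinal

/-- Cofinality of fiber-respecting indices: above every index there is one whose
retraction respects the fibers of `g`. -/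
theorem cofinal_fiber {W X : Type u} [TopologicalSpace W] [TopologicalSpace X]
    [T2Space W] [T2Space X] {Γ : Type u} [PartialOrder Γ] {r : Γ → W → W}
    (hr : IsRetractionalSkeleton r) (hfull : ∀ w : W, ∃ s, r s w = w)
    (g : W → X) (hgc : Continuous g) (s₀ : Γ) :
    ∃ t, s₀ ≤ t ∧ ∀ w w', g w = g w' → g (r t w) = g (r t w') := by
  set P : Set (W × W) := {p | g p.1 = g p.2} with hP
  have hQ : ∀ s : Γ, ∃ Q, Q ⊆ P ∧ Q.Countable ∧
      ((fun p : W × W => (r s p.1, r s p.2)) '' P) ⊆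
        closure ((fun p : W × W => (r s p.1, r s p.2)) '' Q) :=
    fun s => hr.dense_lift_pairs s P
  choose Qf hQP hQc hQd using hQ
  have hstep : ∀ s : Γ, ∃ t, s ≤ t ∧
      ∀ p ∈ (Prod.fst '' Qf s) ∪ (Prod.snd '' Qf s), r t p = p :=
    fun s => hr.absorb hfull _ (((hQc s).image _).union ((hQc s).image _)) s
  choose st hst1 hst2 using hstep
  let c : ℕ → Γ := fun n => Nat.rec s₀ (fun _ prev => st prev) n
  have hc0 : c 0 = s₀ := rfl
  have hcs : ∀ n, c (n+1) = st (c n) := fun n => rfl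
  have hmono : Monotone c := monotone_nat_of_le_succ (fun n => by rw [hcs]; exact hst1 _)
  obtain ⟨t, hlub, htend⟩ := hr.seq_sup c hmono
  have hct : ∀ n, c n ≤ t := fun n => hlub.1 (Set.mem_range_self n)
  have hfixlim : ∀ (w : W) (N : ℕ), r (c N) w = w → r t w = w := by
    intro w N hN
    have h1 := htend w
    have h2 : (fun m => r (c m) w) =ᶠ[atTop] fun _ => w := by
      filter_upwards [Filter.eventually_ge_atTop N] with m hm
      exact hr.fix_mono (hmono hm) hN
    exact tendsto_nhds_unique h1 (tendsto_const_nhds.congr' h2.symm)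
  have hfixt : ∀ n, ∀ p ∈ Qf (c n), r t p.1 = p.1 ∧ r t p.2 = p.2 := by
    intro n p hp
    constructor
    · exact hfixlim p.1 (n+1) (by rw [hcs]; exact hst2 (c n) p.1 (Or.inl ⟨p, hp, rfl⟩))
    · exact hfixlim p.2 (n+1) (by rw [hcs]; exact hst2 (c n) p.2 (Or.inr ⟨p, hp, rfl⟩))
  refine ⟨t, le_trans (le_of_eq hc0.symm) (hct 0), ?_⟩
  intro w w' hww
  -- subtype setting
  haveI hmz := hr.metrizable_range t
  haveI : CompactSpace ↥(Set.range (r t)) := isCompact_iff_compactSpace.mp (hr.compact_range t)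
  set K := ↥(Set.range (r t)) with hK
  have hmemE : ∀ (n : ℕ) (z : W), r (c n) z ∈ Set.range (r t) :=
    fun n z => hr.range_mono (hct n) ⟨z, rfl⟩
  set π : ℕ → K → K := fun n z => ⟨r (c n) (z : W), hmemE n (z : W)⟩ with hπ
  have hπcont : ∀ n, Continuous (π n) :=
    fun n => ((hr.continuous (c n)).comp continuous_subtype_val).subtype_mk _
  have hπcomp : ∀ m n, m ≤ n → ∀ z, π m (π n z) = π m z := by
    intro m n hmn z
    apply Subtype.ext
    exact hr.first_later (hmono hmn) (z : W)
  have hπpt : ∀ z : K, Tendsto (fun n => π n z) atTop (𝓝 z) := by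
    intro z
    rw [tendsto_subtype_rng]
    have h1 := htend (z : W)
    rwa [hr.mem_range_iff.mp z.2] at h1
  set R : Set (K × K) := {p | g (p.1 : W) = g (p.2 : W)} with hR
  set za : K := ⟨r t w, ⟨w, rfl⟩⟩ with hza
  set zb : K := ⟨r t w', ⟨w', rfl⟩⟩ with hzb
  set uu : ℕ → K := fun n => ⟨r (c n) w, hmemE n w⟩ with huu
  set vv : ℕ → K := fun n => ⟨r (c n) w', hmemE n w'⟩ with hvv
  have hu : Tendsto uu atTop (𝓝 za) := by rw [tendsto_subtype_rng]; exact htend w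
  have hv : Tendsto vv atTop (𝓝 zb) := by rw [tendsto_subtype_rng]; exact htend w'
  set val2 : K × K → W × W := Prod.map Subtype.val Subtype.val with hval2
  have hval2ind : Topology.IsInducing val2 :=
    Topology.IsInducing.subtypeVal.prodMap Topology.IsInducing.subtypeVal
  have hdense : ∀ n, (uu n, vv n) ∈
      closure ((fun p : K × K => (π n p.1, π n p.2)) '' R) := by
    intro n
    rw [hval2ind.closure_eq_preimage_closure_image]
    have h1 : (fun p : W × W => (r (c n) p.1, r (c n) p.2)) '' Qf (c n) ⊆
        val2 '' ((fun p : K × K => (π n p.1, π n p.2)) '' R) := by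
      rintro _ ⟨q, hq, rfl⟩
      obtain ⟨hq1, hq2⟩ := hfixt n q hq
      refine ⟨(π n ⟨q.1, ⟨q.1, hq1⟩⟩, π n ⟨q.2, ⟨q.2, hq2⟩⟩),
        ⟨(⟨q.1, ⟨q.1, hq1⟩⟩, ⟨q.2, ⟨q.2, hq2⟩⟩), hQP (c n) hq, rfl⟩, rfl⟩
    have h2 : (r (c n) w, r (c n) w') ∈
        closure ((fun p : W × W => (r (c n) p.1, r (c n) p.2)) '' Qf (c n)) :=
      hQd (c n) ⟨(w, w'), hww, rfl⟩
    exact closure_mono h1 h2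
  have hcore : (za, zb) ∈ closure R :=
    core_pair π hπcont hπcomp hπpt uu vv za zb hu hv R hdense
  -- conclude equality via the closed diagonal
  have hG : Continuous (fun p : W × W => (g p.1, g p.2)) :=
    (hgc.comp continuous_fst).prodMk (hgc.comp continuous_snd)
  have h3 : val2 (za, zb) ∈ closure (val2 '' R) :=
    image_closure_subset_closure_image hval2ind.continuous ⟨(za, zb), hcore, rfl⟩
  have h4 : (fun p : W × W => (g p.1, g p.2)) (val2 (za, zb)) ∈
      closure ((fun p : W × W => (g p.1, g p.2)) '' (val2 '' R)) :=
    image_closure_subset_closure_image hG ⟨val2 (za, zb), h3, rfl⟩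
  have h5 : ((fun p : W × W => (g p.1, g p.2)) '' (val2 '' R)) ⊆ Set.diagonal X := by
    rintro _ ⟨_, ⟨p, hp, rfl⟩, rfl⟩
    exact hp
  have h6 := closure_mono h5 h4
  rw [isClosed_diagonal.closure_eq] at h6
  exact h6

end Cofinal

section TwoToOne

/-- A weakly non-commutative Corson countably compact Fréchet–Urysohn space has a
full retractional skeleton. -/
theorem full_of_fu {X : Type u} [TopologicalSpace X] [T2Space X] (hX : IsWeaklyNCCorson X)
    (h2 : FrechetUrysohnSpace X) : HasFullRetractionalSkeleton X := by
  haveI := h2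
  obtain ⟨hXcc, W, _tW, _t2W, _crW, ⟨hWcc, ⟨Γ, _po, r, hr, hfull'⟩⟩, g, hgc, hgs⟩ := hX
  have hfix : ∀ w, ∃ s, r s w = w := fun w => (hfull' w).imp (fun s hs => hr.mem_range_iff.mp hs)
  have hgcl : IsClosedMap g := isClosedMap_of_cc hWcc g hgc
  set S : Set Γ := {s | ∀ w w', g w = g w' → g (r s w) = g (r s w')} with hS
  have hcof : ∀ s₀ : Γ, ∃ t, s₀ ≤ t ∧ t ∈ S := by
    intro s₀
    obtain ⟨t, ht1, ht2⟩ := cofinal_fiber hr hfix g hgc s₀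
    exact ⟨t, ht1, ht2⟩
  set σ : X → W := Function.surjInv hgs with hσ
  have hgσ : ∀ y, g (σ y) = y := fun y => Function.surjInv_eq hgs y
  set q : {s : Γ // s ∈ S} → X → X := fun s y => g (r s.1 (σ y)) with hq
  have hqg : ∀ (s : {s : Γ // s ∈ S}) (w : W), q s (g w) = g (r s.1 w) :=
    fun s w => s.2 _ _ (hgσ (g w))
  have hrange_eq : ∀ s : {s : Γ // s ∈ S}, Set.range (q s) = g '' Set.range (r s.1) := by
    intro s
    apply Set.Subset.antisymm
    · rintro _ ⟨y, rfl⟩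
      exact ⟨r s.1 (σ y), ⟨σ y, rfl⟩, rfl⟩
    · rintro _ ⟨_, ⟨w, rfl⟩, rfl⟩
      exact ⟨g (r s.1 w), by rw [hqg s (r s.1 w), hr.rr]⟩
  have hdirS : ∀ a b : {s : Γ // s ∈ S}, ∃ c, a ≤ c ∧ b ≤ c := by
    intro a b
    obtain ⟨w0, hw1, hw2⟩ := hr.directed a.1 b.1
    obtain ⟨u, hu1, hu2⟩ := hcof w0
    exact ⟨⟨u, hu2⟩, Subtype.coe_le_coe.mp (le_trans hw1 hu1), Subtype.coe_le_coe.mp (le_trans hw2 hu1)⟩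
  have hnS : Nonempty {s : Γ // s ∈ S} := by
    obtain ⟨u, _, hu2⟩ := hcof hr.nonempty.some
    exact ⟨⟨u, hu2⟩⟩
  refine ⟨{s : Γ // s ∈ S}, inferInstance, q, ⟨?_, ?_, ?_, ?_, ?_, ?_, ?_, ?_, ?_⟩, ?_⟩
  · exact hnS
  · exact hdirS
  · -- continuity
    intro s
    apply continuous_of_comp_closed g hgs hgcl
    have : (fun w => q s (g w)) = fun w => g (r s.1 w) := funext (hqg s)
    rw [this]
    exact hgc.comp (hr.continuous s.1)
  · -- retraction
    intro s
    funext y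
    show q s (q s y) = q s y
    rw [show q s y = g (r s.1 (σ y)) from rfl, hqg s (r s.1 (σ y)), hr.rr]
  · -- compact range
    intro s
    rw [hrange_eq s]
    exact (hr.compact_range s.1).image hgc
  · -- metrizable range
    intro s
    have hm := metrizable_image_of_compact _ (hr.compact_range s.1) (hr.metrizable_range s.1) g hgc
    rwa [← hrange_eq s] at hm
  · -- comp_eq_of_le
    intro s t hst
    constructor
    · funext y
      show q t (q s y) = q s y
      rw [show q s y = g (r s.1 (σ y)) from rfl, hqg t (r s.1 (σ y)),
        hr.later_first (show s.1 ≤ t.1 from hst)]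
    · funext y
      show q s (q t y) = q s y
      rw [show q t y = g (r t.1 (σ y)) from rfl, hqg s (r t.1 (σ y)),
        hr.first_later (show s.1 ≤ t.1 from hst)]
  · -- seq_sup
    intro u hmono
    have hmono' : Monotone (fun n => (u n).1) := fun a b hab => hmono hab
    obtain ⟨t, hlub, htend⟩ := hr.seq_sup (fun n => (u n).1) hmono'
    have htS : t ∈ S := by
      intro w w' hww
      have e1 : Tendsto (fun n => g (r ((u n).1) w)) atTop (𝓝 (g (r t w))) :=
        (hgc.tendsto _).comp (htend w)
      have e2 : Tendsto (fun n => g (r ((u n).1) w')) atTop (𝓝 (g (r t w'))) :=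
        (hgc.tendsto _).comp (htend w')
      have heq : (fun n => g (r ((u n).1) w)) = fun n => g (r ((u n).1) w') :=
        funext (fun n => (u n).2 w w' hww)
      rw [heq] at e1
      exact tendsto_nhds_unique e1 e2
    refine ⟨⟨t, htS⟩, ⟨?_, ?_⟩, ?_⟩
    · rintro _ ⟨n, rfl⟩
      exact hlub.1 ⟨n, rfl⟩
    · intro b hb
      refine hlub.2 ?_
      rintro _ ⟨n, rfl⟩
      exact hb ⟨n, rfl⟩
    · intro y
      show Tendsto (fun n => g (r ((u n).1) (σ y))) atTop (𝓝 (g (r t (σ y))))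
      exact (hgc.tendsto _).comp (htend (σ y))
  · -- tendsto_id
    intro y
    haveI : Nonempty {s : Γ // s ∈ S} := hnS
    haveI : IsDirected {s : Γ // s ∈ S} (· ≤ ·) := ⟨fun a b => (hdirS a b).imp (fun c h => h)⟩
    have hvalT : Tendsto (Subtype.val : {s : Γ // s ∈ S} → Γ) atTop atTop := by
      rw [Filter.tendsto_atTop_atTop]
      intro b
      obtain ⟨u, hu1, hu2⟩ := hcof b
      exact ⟨⟨u, hu2⟩, fun a ha => le_trans hu1 (Subtype.coe_le_coe.mpr ha)⟩
    have h1 : Tendsto (fun s : {s : Γ // s ∈ S} => r s.1 (σ y)) atTop (𝓝 (σ y)) :=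
      (hr.tendsto_id (σ y)).comp hvalT
    have h2 : Tendsto (fun s : {s : Γ // s ∈ S} => g (r s.1 (σ y))) atTop (𝓝 (g (σ y))) :=
      (hgc.tendsto _).comp h1
    rwa [hgσ y] at h2
  · -- fullness
    intro y
    obtain ⟨w, rfl⟩ := hgs y
    obtain ⟨s', hs'⟩ := hfix w
    obtain ⟨t, ht1, ht2⟩ := hcof s'
    refine ⟨⟨t, ht2⟩, g w, ?_⟩
    rw [hqg ⟨t, ht2⟩ w, hr.fix_mono ht1 hs']

end TwoToOne



/-- For a weakly non-commutative Corson countably compact space `X`,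
the following are equivalent: `X` admits a full retractional skeleton, `X` is
Fréchet–Urysohn, and `X` has countable tightness. -/
theorem ncCorson_tfae_of_weaklyNCCorson
    {X : Type u} [TopologicalSpace X] [T2Space X] [CompletelyRegularSpace X]
    (hX : IsWeaklyNCCorson X) :
    List.TFAE [HasFullRetractionalSkeleton X,
      FrechetUrysohnSpace X,
      ∀ A : Set X, ∀ x ∈ closure A, ∃ C ⊆ A, C.Countable ∧ x ∈ closure C] := by
  tfae_have 1 → 3 := fun h1 => tight_of_full h1
  tfae_have 3 → 2 := fun h3 => fu_of_tight hX h3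
  tfae_have 2 → 1 := fun h2 => full_of_fu hX h2
  tfae_have 2 → 3 := by
    intro h2 A x hx
    haveI := h2
    obtain ⟨c, hc, hct⟩ := mem_closure_iff_seq_limit.mp hx
    refine ⟨Set.range c, ?_, Set.countable_range c, ?_⟩
    · rintro _ ⟨n, rfl⟩; exact hc n
    · exact mem_closure_of_tendsto hct (Filter.Eventually.of_forall
        (fun n => Set.mem_range_self n))
  tfae_finish
end

section
/- Let η be an ordinal. The compact ordinal interval [0,η] with the order topology admits a full retractional skeleton (i.e., is non-commutative Corson) if and only if η < ω₁, the first uncountable ordinal. -/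
open Filter Topology Set

universe u

section Aux

open Ordinal Cardinal

/-- Any sequence converging to `ω₁` inside `[0,η]` is eventually equal to `ω₁`. -/
theorem aux_eventually_eq_omega1 {η : Ordinal.{u}} (hη : Ordinal.omega 1 ≤ η)
    (y : ℕ → ↥(Set.Iic η)) (hy : Filter.Tendsto y Filter.atTop (nhds ⟨Ordinal.omega 1, hη⟩)) :
    ∀ᶠ n in Filter.atTop, y n = ⟨Ordinal.omega 1, hη⟩ := by
  classical
  set Ω : ↥(Set.Iic η) := ⟨Ordinal.omega 1, hη⟩ with hΩdef
  set g : ℕ → Ordinal.{u} := fun n => if ((y n : Ordinal) < Ordinal.omega 1) then (y n : Ordinal) else 0 with hg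
  have hglt : ∀ n, g n < Ordinal.omega 1 := by
    intro n
    by_cases h : (y n : Ordinal) < Ordinal.omega 1
    · simp [hg, h]
    · simpa [hg, h] using Ordinal.omega_pos 1
  have hδ : (⨆ n, g n) < Ordinal.omega 1 := by
    rw [← Cardinal.ord_aleph]
    rw [Cardinal.ord_aleph]; exact Ordinal.iSup_lt_omega_one (fun n => hglt n)
  obtain ⟨μ, hμ1, hμ2⟩ : ∃ μ : Ordinal, Ordinal.omega 1 < μ ∧
      ∀ n, Ordinal.omega 1 < (y n : Ordinal) → μ ≤ (y n : Ordinal) := by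
    by_cases hA : ({o : Ordinal | (∃ n, (y n : Ordinal) = o) ∧ Ordinal.omega 1 < o}).Nonempty
    · refine ⟨sInf {o : Ordinal | (∃ n, (y n : Ordinal) = o) ∧ Ordinal.omega 1 < o}, ?_, ?_⟩
      · exact (csInf_mem hA).2
      · intro n hn
        exact csInf_le (OrderBot.bddBelow _) ⟨⟨n, rfl⟩, hn⟩
    · refine ⟨Ordinal.omega 1 + 1, ?_, ?_⟩
      · rw [Ordinal.add_one_eq_succ]; exact Order.lt_succ _
      · intro n hn
        exact absurd ⟨⟨n, rfl⟩, hn⟩ (fun h => hA ⟨_, h⟩)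
  have hV : IsOpen ((fun x : ↥(Set.Iic η) => (x : Ordinal)) ⁻¹' Set.Ioo (⨆ n, g n) μ) :=
    IsOpen.preimage continuous_subtype_val isOpen_Ioo
  have hΩV : Ω ∈ (fun x : ↥(Set.Iic η) => (x : Ordinal)) ⁻¹' Set.Ioo (⨆ n, g n) μ := ⟨hδ, hμ1⟩
  filter_upwards [hy.eventually (hV.mem_nhds hΩV)] with n hn
  rcases hn with ⟨h1, h2⟩
  rcases lt_trichotomy ((y n : Ordinal)) (Ordinal.omega 1) with h | h | h
  · exfalso
    have : g n = (y n : Ordinal) := by simp [hg, h]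
    have hle : g n ≤ ⨆ m, g m := le_ciSup (Ordinal.bddAbove_range g) n
    rw [this] at hle
    exact absurd h1 (not_lt.2 hle)
  · exact Subtype.ext h
  · exact absurd h2 (not_lt.2 (hμ2 n h))

/-- A countable linear order with the order topology is second countable. -/
theorem aux_secondCountable {α : Type*} [TopologicalSpace α] [LinearOrder α]
    [OrderTopology α] [Countable α] : SecondCountableTopology α := by
  refine ⟨⟨{ s | ∃ a, s = Set.Ioi a ∨ s = Set.Iio a }, ?_,
    OrderTopology.topology_eq_generate_intervals⟩⟩
  have hsub : { s : Set α | ∃ a, s = Set.Ioi a ∨ s = Set.Iio a } ⊆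
      Set.range (Set.Ioi (α := α)) ∪ Set.range (Set.Iio (α := α)) := by
    rintro s ⟨a, h | h⟩
    · exact Or.inl ⟨a, h.symm⟩
    · exact Or.inr ⟨a, h.symm⟩
  exact Set.Countable.mono hsub ((Set.countable_range _).union (Set.countable_range _))

end Aux

/-- The ordinal interval `[0, η]` admits a full retractional skeleton iff
`η < ω₁`. -/
theorem ordinalInterval_fullSkeleton_iff
    (η : Ordinal.{u}) :
    HasFullRetractionalSkeleton ↥(Set.Iic η) ↔ η < Ordinal.omega 1 := by
  constructor
  · rintro ⟨Γ, _, r, hsk, hfull⟩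
    by_contra hlt
    rw [not_lt] at hlt
    -- hlt : ω₁ ≤ η
    haveI : Nonempty Γ := hsk.nonempty
    haveI : IsDirected Γ (· ≤ ·) := ⟨hsk.directed⟩
    set Ω : ↥(Set.Iic η) := ⟨Ordinal.omega 1, hlt⟩ with hΩdef
    have hω₁lim : Order.IsSuccLimit (Ordinal.omega 1) := by
      rw [← Cardinal.ord_aleph]; exact Cardinal.isSuccLimit_ord (Cardinal.aleph0_le_aleph 1)
    have hfix : ∀ s (x : ↥(Set.Iic η)), x ∈ Set.range (r s) → r s x = x := by
      rintro s _ ⟨y, rfl⟩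
      exact congrFun (hsk.retraction s) y
    -- isolation of Ω in each metrizable retract
    have hiso : ∀ s : Γ, ∃ β : Ordinal, β < Ordinal.omega 1 ∧
        (Ω ∈ Set.range (r s) → ∀ x : ↥(Set.Iic η), β < (x : Ordinal) →
          (x : Ordinal) ≤ Ordinal.omega 1 → r s x = Ω) := by
      intro s
      by_cases hΩs : Ω ∈ Set.range (r s)
      · haveI := hsk.metrizable_range s
        have hopen : ∃ U : Set ↥(Set.Iic η), IsOpen U ∧ Ω ∈ U ∧
            ∀ x ∈ Set.range (r s), x ∈ U → x = Ω := by
          set pt : ↥(Set.range (r s)) := ⟨Ω, hΩs⟩ with hpt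
          have hnot : pt ∉ closure {y : ↥(Set.range (r s)) | y ≠ pt} := by
            intro hmem
            rw [mem_closure_iff_seq_limit] at hmem
            obtain ⟨y, hy1, hy2⟩ := hmem
            have htend : Filter.Tendsto (fun n => ((y n : ↥(Set.range (r s))) : ↥(Set.Iic η)))
                Filter.atTop (nhds Ω) := (continuous_subtype_val.tendsto pt).comp hy2
            obtain ⟨n, hn⟩ := (aux_eventually_eq_omega1 hlt _ htend).exists
            exact hy1 n (Subtype.ext hn)
          have hW : IsOpen ((closure {y : ↥(Set.range (r s)) | y ≠ pt})ᶜ) :=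
            isClosed_closure.isOpen_compl
          have hWpt : pt ∈ (closure {y : ↥(Set.range (r s)) | y ≠ pt})ᶜ := hnot
          have hWsub : (closure {y : ↥(Set.range (r s)) | y ≠ pt})ᶜ ⊆ {pt} := by
            intro z hz
            by_contra hzne
            exact hz (subset_closure hzne)
          have hmemW : (closure {y : ↥(Set.range (r s)) | y ≠ pt})ᶜ ∈ nhds pt :=
            hW.mem_nhds hWpt
          rw [nhds_subtype_eq_comap, Filter.mem_comap] at hmemW
          obtain ⟨T, hT1, hT2⟩ := hmemW
          refine ⟨interior T, isOpen_interior, mem_interior_iff_mem_nhds.2 hT1, ?_⟩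
          intro x hx hxU
          have hmemT : x ∈ T := interior_subset hxU
          have h7 : (⟨x, hx⟩ : ↥(Set.range (r s))) ∈ Subtype.val ⁻¹' T :=
            Set.mem_preimage.mpr hmemT
          have h8 := hWsub (hT2 h7)
          exact congrArg Subtype.val h8
        obtain ⟨U, hUopen, hUΩ, hUK⟩ := hopen
        have hrΩ : r s Ω = Ω := hfix s Ω hΩs
        have hC : (r s) ⁻¹' U ∈ nhds Ω := by
          refine ((hsk.continuous s).continuousAt).preimage_mem_nhds ?_
          rw [hrΩ]
          exact hUopen.mem_nhds hUΩ
        have hzero : (⟨0, by simp⟩ : ↥(Set.Iic η)) < Ω := by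
          show (0 : Ordinal) < Ordinal.omega 1
          exact Ordinal.omega_pos 1
        obtain ⟨l, hl, hIoc⟩ := exists_Ioc_subset_of_mem_nhds hC ⟨_, hzero⟩
        refine ⟨(l : Ordinal), ?_, ?_⟩
        · exact_mod_cast hl
        · intro _ x hx1 hx2
          have hxIoc : x ∈ Set.Ioc l Ω := by
            constructor
            · exact_mod_cast hx1
            · exact Subtype.coe_le_coe.1 hx2
          exact hUK _ ⟨x, rfl⟩ (hIoc hxIoc)
      · exact ⟨0, Ordinal.omega_pos 1, fun h => absurd h hΩs⟩
    choose β hβlt hβ using hiso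
    -- the chosen isolated successor points
    have haval : ∀ s : Γ, β s + 1 < Ordinal.omega 1 := by
      intro s
      rw [Ordinal.add_one_eq_succ]
      exact hω₁lim.succ_lt (hβlt s)
    set a : Γ → ↥(Set.Iic η) := fun s => ⟨β s + 1, le_trans (haval s).le hlt⟩ with hadef
    have haopen : ∀ s : Γ, IsOpen ({a s} : Set ↥(Set.Iic η)) := by
      intro s
      have heq : ({a s} : Set ↥(Set.Iic η)) = (Subtype.val) ⁻¹' (Set.Ioo (β s) (β s + 2)) := by
        ext x
        simp only [Set.mem_singleton_iff, Set.mem_preimage, Set.mem_Ioo]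
        constructor
        · rintro rfl
          refine ⟨?_, ?_⟩
          · rw [hadef]; simp only [Subtype.coe_mk]
            rw [Ordinal.add_one_eq_succ]; exact Order.lt_succ _
          · rw [hadef]; simp only [Subtype.coe_mk]
            rw [← one_add_one_eq_two, ← add_assoc]
            rw [Ordinal.add_one_eq_succ]; exact Order.lt_succ _
        · rintro ⟨h1, h2⟩
          apply Subtype.ext
          show (x : Ordinal) = β s + 1
          have h2' : (x : Ordinal) < (β s + 1) + 1 := by
            rw [add_assoc, one_add_one_eq_two]; exact h2
          rw [Ordinal.add_one_eq_succ] at h2'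
          rw [Order.lt_succ_iff] at h2'
          have h1' : β s + 1 ≤ (x : Ordinal) := by
            rw [Ordinal.add_one_eq_succ, Order.succ_le_iff]; exact h1
          exact le_antisymm h2' h1'
      rw [heq]
      exact IsOpen.preimage continuous_subtype_val isOpen_Ioo
    have hnext : ∀ s : Γ, ∃ u, s ≤ u ∧ ∀ v, u ≤ v → r v (a s) = a s := by
      intro s
      have h1 : ∀ᶠ v in Filter.atTop, r v (a s) ∈ ({a s} : Set ↥(Set.Iic η)) :=
        (hsk.tendsto_id (a s)).eventually ((haopen s).mem_nhds rfl)
      rw [Filter.eventually_atTop] at h1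
      obtain ⟨u₀, hu₀⟩ := h1
      obtain ⟨u, hu1, hu2⟩ := hsk.directed s u₀
      exact ⟨u, hu1, fun v hv => hu₀ v (le_trans hu2 hv)⟩
    choose next hnext1 hnext2 using hnext
    obtain ⟨s₀, hs₀⟩ := hfull Ω
    set t : ℕ → Γ := fun n => next^[n] s₀ with htdef
    have htsucc : ∀ n, t (n + 1) = next (t n) := fun n =>
      Function.iterate_succ_apply' next n s₀
    have htmono : Monotone t := monotone_nat_of_le_succ fun n => by
      rw [htsucc]; exact hnext1 (t n)
    obtain ⟨T, hTlub, hTtend⟩ := hsk.seq_sup t htmono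
    have hTge : ∀ n, t n ≤ T := fun n => hTlub.1 ⟨n, rfl⟩
    have hΩn : ∀ n, Ω ∈ Set.range (r (t n)) := by
      intro n
      have hle : s₀ ≤ t n := htmono (Nat.zero_le n)
      have h := (hsk.comp_eq_of_le s₀ (t n) hle).1
      refine ⟨Ω, ?_⟩
      calc r (t n) Ω = r (t n) (r s₀ Ω) := by rw [hfix s₀ Ω hs₀]
        _ = r s₀ Ω := congrFun h Ω
        _ = Ω := hfix s₀ Ω hs₀
    -- the supremum point
    set A : Ordinal := ⨆ n, ((a (t n) : ↥(Set.Iic η)) : Ordinal) with hAdef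
    have hA_lt : A < Ordinal.omega 1 := by
      rw [hAdef, ← Cardinal.ord_aleph]
      rw [Cardinal.ord_aleph]; exact Ordinal.iSup_lt_omega_one
        (fun n => haval (t n))
    have hA_gt : ∀ n, β (t n) < A := by
      intro n
      have h1 : β (t n) < ((a (t n) : ↥(Set.Iic η)) : Ordinal) := by
        show β (t n) < β (t n) + 1
        rw [Ordinal.add_one_eq_succ]; exact Order.lt_succ _
      exact lt_of_lt_of_le h1 (le_ciSup (Ordinal.bddAbove_range _) n)
    have hclosed : IsClosed (Subtype.val '' Set.range (r T) : Set Ordinal) :=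
      ((hsk.compact_range T).image continuous_subtype_val).isClosed
    have hmemim : ∀ n : ℕ, ((a (t n) : ↥(Set.Iic η)) : Ordinal) ∈ Subtype.val '' Set.range (r T) := by
      intro n
      have hle : next (t n) ≤ T := by rw [← htsucc n]; exact hTge (n + 1)
      exact ⟨a (t n), ⟨a (t n), hnext2 (t n) T hle⟩, rfl⟩
    have hsup_mem : A ∈ Subtype.val '' Set.range (r T) := by
      have h := (Ordinal.isClosed_iff_iSup.1 hclosed)
        (⟨ULift.up 0⟩ : Nonempty (ULift.{u, 0} ℕ))
        (fun i => ((a (t i.down) : ↥(Set.Iic η)) : Ordinal)) (fun i => hmemim i.down)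
      have hrange : Set.range (fun i : ULift.{u, 0} ℕ => ((a (t i.down) : ↥(Set.Iic η)) : Ordinal)) =
          Set.range (fun n : ℕ => ((a (t n) : ↥(Set.Iic η)) : Ordinal)) := by
        ext o
        constructor
        · rintro ⟨i, hi⟩; exact ⟨i.down, hi⟩
        · rintro ⟨n, hn⟩; exact ⟨ULift.up n, hn⟩
      have heq : (⨆ i : ULift.{u, 0} ℕ, ((a (t i.down) : ↥(Set.Iic η)) : Ordinal)) = A := by
        rw [hAdef, iSup, iSup, hrange]
      rw [heq] at h
      exact h
    obtain ⟨xstar, hxK, hxval⟩ := hsup_mem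
    have h1 : ∀ n, r (t n) xstar = Ω := by
      intro n
      refine hβ (t n) (hΩn n) xstar ?_ ?_
      · rw [hxval]; exact hA_gt n
      · rw [hxval]; exact hA_lt.le
    have h2 := hTtend xstar
    rw [show (fun n => r (t n) xstar) = fun _ => Ω from funext h1] at h2
    have h3 : r T xstar = Ω := tendsto_nhds_unique h2 tendsto_const_nhds
    have h4 : r T xstar = xstar := hfix T xstar hxK
    have h5 : xstar = Ω := h4.symm.trans h3
    have h6 : A = Ordinal.omega 1 := by
      rw [← hxval]
      exact congrArg Subtype.val h5
    exact hA_lt.ne h6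
  · intro hη
    -- [0,η] is compact metrizable; the trivial skeleton works
    haveI hcomp : CompactSpace ↥(Set.Iic η) := by
      rw [← isCompact_iff_compactSpace]
      have h := isCompact_Icc (α := Ordinal.{u}) (a := 0) (b := η)
      have : Set.Icc (0 : Ordinal) η = Set.Iic η := by
        rw [← Ordinal.bot_eq_zero, Set.Icc_bot]
      rwa [this] at h
    have hω₁lim : Order.IsSuccLimit (Ordinal.omega 1) := by
      rw [← Cardinal.ord_aleph]; exact Cardinal.isSuccLimit_ord (Cardinal.aleph0_le_aleph 1)
    have hcnt : (Set.Iic η).Countable := by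
      rw [Cardinal.countable_iff_lt_aleph_one]
      have hIic : Set.Iic η = Set.Iio (Order.succ η) := (Order.Iio_succ η).symm
      rw [hIic, Ordinal.mk_Iio_ordinal, Cardinal.lift_lt_aleph_one, ← Cardinal.lt_ord,
        Cardinal.ord_aleph]
      exact hω₁lim.succ_lt hη
    haveI : Countable ↥(Set.Iic η) := hcnt.to_subtype
    haveI : SecondCountableTopology ↥(Set.Iic η) := aux_secondCountable
    haveI hmet : TopologicalSpace.MetrizableSpace ↥(Set.Iic η) := inferInstance
    refine ⟨PUnit, inferInstance, fun _ => id, ⟨?_, ?_, ?_, ?_, ?_, ?_, ?_, ?_, ?_⟩,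
      fun x => ⟨PUnit.unit, x, rfl⟩⟩
    · exact ⟨PUnit.unit⟩
    · exact fun s t => ⟨PUnit.unit, (Subsingleton.elim _ _).le, (Subsingleton.elim _ _).le⟩
    · exact fun _ => continuous_id
    · exact fun _ => rfl
    · intro s
      rw [Set.range_id]
      exact isCompact_univ
    · intro s
      rw [Set.range_id]
      infer_instance
    · exact fun s t _ => ⟨rfl, rfl⟩
    · intro u hu
      refine ⟨PUnit.unit, ⟨fun x _ => (Subsingleton.elim x _).le,
        fun x _ => (Subsingleton.elim _ x).le⟩, fun x => tendsto_const_nhds⟩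
    · exact fun x => tendsto_const_nhds
end

section
/- For every ordinal η, the compact ordinal interval [0,η] with the order topology admits a retractional skeleton (i.e., [0,η] is a non-commutative Valdivia compact space). -/
open Filter Topology Set

universe u

section Aux
namespace OrdValdivia


/-- Admissibility: every limit element of `B` is approached from below within `B`. -/
def adm (B : Set Ordinal.{u}) : Prop :=
  ∀ a ∈ B, Order.IsSuccLimit a → ∀ b < a, ∃ c ∈ B, b < c ∧ c < a

noncomputable def ρ (B : Set Ordinal.{u}) (x : Ordinal.{u}) : Ordinal.{u} :=
  sSup (B ∩ Set.Iic x)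

variable {B C : Set Ordinal.{u}} {x y : Ordinal.{u}}

lemma inter_ne (h0 : (0 : Ordinal.{u}) ∈ B) (x : Ordinal.{u}) : (B ∩ Set.Iic x).Nonempty :=
  ⟨0, h0, (zero_le : (0 : Ordinal.{u}) ≤ x)⟩

lemma inter_bdd (B : Set Ordinal.{u}) (x : Ordinal.{u}) : BddAbove (B ∩ Set.Iic x) :=
  ⟨x, fun _ hy => hy.2⟩

lemma ρ_le (h0 : (0 : Ordinal.{u}) ∈ B) (x : Ordinal.{u}) : ρ B x ≤ x :=
  csSup_le (inter_ne h0 x) fun _ hy => hy.2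

lemma le_ρ (hy : y ∈ B) (hyx : y ≤ x) : y ≤ ρ B x :=
  le_csSup (inter_bdd B x) ⟨hy, hyx⟩

lemma ρ_mem (hB : IsClosed B) (h0 : (0 : Ordinal.{u}) ∈ B) (x : Ordinal.{u}) : ρ B x ∈ B :=
  ((hB.inter isClosed_Iic).csSup_mem (inter_ne h0 x) (inter_bdd B x)).1

lemma ρ_fix (h : x ∈ B) : ρ B x = x :=
  le_antisymm (csSup_le ⟨x, h, Set.mem_Iic.mpr le_rfl⟩ fun _ hy => hy.2) (le_ρ h le_rfl)

lemma ρ_mono_set (hB : IsClosed B) (h0 : (0 : Ordinal.{u}) ∈ B) (hBC : B ⊆ C)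
    (x : Ordinal.{u}) : ρ B x ≤ ρ C x :=
  le_csSup (inter_bdd C x) ⟨hBC (ρ_mem hB h0 x), ρ_le h0 x⟩

lemma ρ_mono (h0 : (0 : Ordinal.{u}) ∈ B) (hxy : x ≤ y) : ρ B x ≤ ρ B y :=
  csSup_le (inter_ne h0 x) fun z hz => le_csSup (inter_bdd B y) ⟨hz.1, hz.2.trans hxy⟩

lemma ρ_idem (hB : IsClosed B) (h0 : (0 : Ordinal.{u}) ∈ B) (x : Ordinal.{u}) :
    ρ B (ρ B x) = ρ B x :=
  ρ_fix (ρ_mem hB h0 x)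

lemma ρ_continuous (hB : IsClosed B) (h0 : (0 : Ordinal.{u}) ∈ B) (ha : adm B) :
    Continuous (ρ B) := by
  rw [continuous_iff_continuousAt]
  intro x
  by_cases hx : Order.IsSuccLimit x
  · by_cases hfix : ρ B x = x
    · have hxB : x ∈ B := hfix ▸ ρ_mem hB h0 x
      unfold ContinuousAt
      rw [hfix, (SuccOrder.hasBasis_nhds_Ioc_of_exists_lt ⟨0, hx.pos⟩).tendsto_iff (SuccOrder.hasBasis_nhds_Ioc_of_exists_lt ⟨0, hx.pos⟩)]
      intro β hβ
      obtain ⟨c, hcB, hβc, hcx⟩ := ha x hxB hx β hβ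
      exact ⟨c, hcx, fun y hy => ⟨hβc.trans_le (le_ρ hcB hy.1.le), (ρ_le h0 y).trans hy.2⟩⟩
    · have hlt : ρ B x < x := (ρ_le h0 x).lt_of_ne hfix
      have hconst : (fun _ : Ordinal.{u} => ρ B x) =ᶠ[nhds x] ρ B := by
        filter_upwards [(SuccOrder.hasBasis_nhds_Ioc_of_exists_lt ⟨0, hx.pos⟩).mem_of_mem hlt] with y hy
        exact le_antisymm (le_ρ (ρ_mem hB h0 x) hy.1.le) (ρ_mono h0 hy.2)
      exact continuousAt_const.congr hconst
  · have h : nhds x = pure x := Ordinal.nhds_eq_pure.2 hx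
    unfold ContinuousAt
    rw [h]
    exact tendsto_pure_nhds (ρ B) x



lemma countable_closure {S : Set Ordinal.{u}} (hS : S.Countable) (hbdd : BddAbove S) :
    (closure S).Countable := by
  classical
  set z : Ordinal.{u} := Order.succ (sSup S) with hz
  set F : Ordinal.{u} → Ordinal.{u} :=
    fun a => if h : (S ∩ Set.Ioi a).Nonempty then sInf (S ∩ Set.Ioi a) else z with hF
  have hFz : ∀ a, (S ∩ Set.Ioi a).Nonempty → F a ∈ S ∩ Set.Ioi a := by
    intro a h
    simp only [hF, dif_pos h]
    exact csInf_mem h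
  have maps : Set.MapsTo F (closure S) (insert z S) := by
    intro a _
    by_cases h : (S ∩ Set.Ioi a).Nonempty
    · exact Set.mem_insert_of_mem _ (hFz a h).1
    · simp only [hF, dif_neg h]
      exact Set.mem_insert _ _
  have key : ∀ a ∈ closure S, (S ∩ Set.Iic a).Nonempty ∧ sSup (S ∩ Set.Iic a) = a :=
    fun a ha => ((Ordinal.mem_closure_tfae a S).out 0 2).mp ha
  have seg : ∀ a ∈ closure S, ∀ b, F a = F b → S ∩ Set.Iic a ⊆ S ∩ Set.Iic b := by
    intro a ha b hab s hs
    refine ⟨hs.1, ?_⟩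
    by_contra hsb
    simp only [Set.mem_Iic, not_le] at hsb
    have hne : (S ∩ Set.Ioi b).Nonempty := ⟨s, hs.1, Set.mem_Ioi.mpr hsb⟩
    have hFb := hFz b hne
    have hFb_le : F b ≤ a := by
      have h1 : F b ≤ s := by
        simp only [hF, dif_pos hne]
        exact csInf_le (OrderBot.bddBelow _) ⟨hs.1, Set.mem_Ioi.mpr hsb⟩
      exact h1.trans hs.2
    by_cases h : (S ∩ Set.Ioi a).Nonempty
    · have h2 : a < F a := (hFz a h).2
      rw [hab] at h2
      exact absurd hFb_le (not_le.mpr h2)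
    · have hFa : F a = z := by simp only [hF, dif_neg h]
      have h3 : F b ≤ sSup S := le_csSup hbdd hFb.1
      rw [← hab, hFa, hz] at h3
      exact (Order.lt_succ (sSup S)).not_ge h3
  have inj : Set.InjOn F (closure S) := by
    intro a ha b hb hab
    have heq := Set.Subset.antisymm (seg a ha b hab) (seg b hb a hab.symm)
    have h1 := (key a ha).2
    rw [heq] at h1
    rw [← h1, (key b hb).2]
  exact maps.countable_of_injOn inj (hS.insert z)

lemma subbasis_countable {Y : Type*} [Countable Y] (f : Y → Ordinal.{u}) :
    (Set.preimage f '' {s | ∃ a, s = Set.Ioi a ∨ s = Set.Iio a}).Countable := by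
  have hsub : (Set.preimage f '' {s | ∃ a, s = Set.Ioi a ∨ s = Set.Iio a}) ⊆
      insert ∅ (insert Set.univ
        ((Set.range fun y : Y => {z | f y ≤ f z}) ∪
         (Set.range fun y : Y => {z | f z < f y}))) := by
    rintro _ ⟨s, ⟨a, rfl | rfl⟩, rfl⟩
    · by_cases h : (f ⁻¹' Set.Ioi a).Nonempty
      · obtain ⟨y0, hy0mem, hy0⟩ := csInf_mem (h.image f)
        refine Set.mem_insert_of_mem _ (Set.mem_insert_of_mem _ (Or.inl ⟨y0, ?_⟩))
        have hay0 : a < f y0 := hy0mem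
        ext z
        simp only [Set.mem_setOf_eq, Set.mem_preimage, Set.mem_Ioi]
        constructor
        · intro hz
          exact hay0.trans_le hz
        · intro hz
          rw [hy0]
          exact csInf_le (OrderBot.bddBelow _) ⟨z, hz, rfl⟩
      · rw [Set.not_nonempty_iff_eq_empty] at h
        rw [h]
        exact Set.mem_insert _ _
    · by_cases h : (f ⁻¹' Set.Ici a).Nonempty
      · obtain ⟨y0, hy0mem, hy0⟩ := csInf_mem (h.image f)
        refine Set.mem_insert_of_mem _ (Set.mem_insert_of_mem _ (Or.inr ⟨y0, ?_⟩))
        have hay0 : a ≤ f y0 := hy0mem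
        ext z
        simp only [Set.mem_setOf_eq, Set.mem_preimage, Set.mem_Iio]
        constructor
        · intro hz
          by_contra hcon
          push_neg at hcon
          have hle : f y0 ≤ f z := by
            rw [hy0]
            exact csInf_le (OrderBot.bddBelow _) ⟨z, hcon, rfl⟩
          exact absurd hz (not_lt.mpr hle)
        · intro hz
          exact hz.trans_le hay0
      · rw [Set.not_nonempty_iff_eq_empty] at h
        have huniv : f ⁻¹' Set.Iio a = Set.univ := by
          ext z
          simp only [Set.mem_preimage, Set.mem_Iio, Set.mem_univ, iff_true]
          by_contra hcon
          push_neg at hcon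
          exact absurd (Set.mem_preimage.mpr hcon : z ∈ f ⁻¹' Set.Ici a) (by rw [h]; exact Set.notMem_empty z)
        rw [huniv]
        exact Set.mem_insert_of_mem _ (Set.mem_insert _ _)
  exact Set.Countable.mono hsub
    ((((Set.countable_range _).union (Set.countable_range _)).insert _).insert _)

lemma metrizable_of_countable_embedding {Y : Type*} [TopologicalSpace Y] [Countable Y]
    {f : Y → Ordinal.{u}} (hf : Topology.IsEmbedding f) :
    TopologicalSpace.MetrizableSpace Y := by
  haveI : T3Space Y := hf.t3Space
  haveI : SecondCountableTopology Y := by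
    refine ⟨⟨(Set.preimage f) '' {s | ∃ a, s = Set.Ioi a ∨ s = Set.Iio a},
      subbasis_countable f, ?_⟩⟩
    rw [hf.eq_induced, OrderTopology.topology_eq_generate_intervals (α := Ordinal.{u}),
      Preorder.topology, induced_generateFrom_eq]
  exact TopologicalSpace.metrizableSpace_of_t3_secondCountable Y

variable (η : Ordinal.{u})

/-- The index set: countable, closed, admissible subsets of `[0,η]` containing `0`. -/
def Good (A : Set ↥(Set.Iic η)) : Prop :=
  A.Countable ∧ IsClosed (Subtype.val '' A) ∧ (0 : Ordinal.{u}) ∈ Subtype.val '' A ∧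
    adm (Subtype.val '' A)

def zeroX : ↥(Set.Iic η) := ⟨0, Set.mem_Iic.mpr (zero_le : (0 : Ordinal.{u}) ≤ η)⟩

lemma good_pair (w : ↥(Set.Iic η)) (hw : ¬ Order.IsSuccLimit (w : Ordinal.{u})) :
    Good η {zeroX η, w} := by
  have himg : Subtype.val '' ({zeroX η, w} : Set ↥(Set.Iic η)) = {(0 : Ordinal.{u}), ↑w} :=
    Set.image_pair _ _ _
  refine ⟨(Set.countable_singleton _).insert _, ?_, ?_, ?_⟩
  · rw [himg]
    exact (Set.finite_singleton _).insert _ |>.isClosed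
  · rw [himg]
    exact Set.mem_insert _ _
  · rw [himg]
    rintro a (rfl | rfl) hl
    · exact absurd rfl hl.ne_zero
    · exact absurd hl hw

lemma good_union {A B : Set ↥(Set.Iic η)} (hA : Good η A) (hB : Good η B) :
    Good η (A ∪ B) := by
  refine ⟨hA.1.union hB.1, ?_, ?_, ?_⟩
  · rw [Set.image_union]
    exact hA.2.1.union hB.2.1
  · rw [Set.image_union]
    exact Set.mem_union_left _ hA.2.2.1
  · rw [Set.image_union]
    intro a ha hl b hb
    rcases ha with ha | ha
    · obtain ⟨c, hc, h1, h2⟩ := hA.2.2.2 a ha hl b hb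
      exact ⟨c, Or.inl hc, h1, h2⟩
    · obtain ⟨c, hc, h1, h2⟩ := hB.2.2.2 a ha hl b hb
      exact ⟨c, Or.inr hc, h1, h2⟩


end OrdValdivia
end Aux

section MainConstruction
namespace OrdValdivia

variable {η : Ordinal.{u}}

noncomputable def rr (A : {A : Set ↥(Set.Iic η) // Good η A}) (x : ↥(Set.Iic η)) :
    ↥(Set.Iic η) :=
  ⟨ρ (Subtype.val '' A.1) x.1, Set.mem_Iic.mpr ((ρ_le A.2.2.2.1 x.1).trans (Set.mem_Iic.mp x.2))⟩

lemma val_rr (A : {A : Set ↥(Set.Iic η) // Good η A}) (x : ↥(Set.Iic η)) :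
    (rr A x : Ordinal.{u}) = ρ (Subtype.val '' A.1) x.1 := rfl

lemma range_rr (A : {A : Set ↥(Set.Iic η) // Good η A}) : Set.range (rr A) = A.1 := by
  ext y
  constructor
  · rintro ⟨x, rfl⟩
    obtain ⟨a, haA, ha⟩ := ρ_mem A.2.2.1 A.2.2.2.1 (x : Ordinal.{u})
    have h : rr A x = a := Subtype.ext ha.symm
    rw [h]
    exact haA
  · intro hy
    exact ⟨y, Subtype.ext (ρ_fix (Set.mem_image_of_mem _ hy))⟩

lemma isClosed_of_good {A : Set ↥(Set.Iic η)} (hA : Good η A) : IsClosed A := by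
  have h : A = Subtype.val ⁻¹' (Subtype.val '' A) := (Subtype.val_injective.preimage_image A).symm
  rw [h]
  exact hA.2.1.preimage continuous_subtype_val

end OrdValdivia
end MainConstruction


open OrdValdivia

/-- Every compact ordinal interval `[0, η]` admits a retractional
skeleton. -/
theorem ordinalInterval_hasRetractionalSkeleton (η : Ordinal.{u}) :
    HasRetractionalSkeleton ↥(Set.Iic η) := by
  classical
  haveI hcs : CompactSpace ↥(Set.Iic η) := by
    apply isCompact_iff_compactSpace.mp
    have h : Set.Iic η = Set.Icc 0 η := by
      ext x; simp [zero_le]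
    rw [h]
    exact isCompact_Icc
  refine ⟨{A : Set ↥(Set.Iic η) // Good η A}, inferInstance, rr, ?_, ?_, ?_, ?_, ?_, ?_, ?_, ?_, ?_⟩
  · -- nonempty
    exact ⟨⟨{zeroX η, zeroX η}, good_pair η (zeroX η) (fun hl => hl.ne_zero rfl)⟩⟩
  · -- directed
    intro s t
    exact ⟨⟨s.1 ∪ t.1, good_union η s.2 t.2⟩, Set.subset_union_left, Set.subset_union_right⟩
  · -- continuous
    intro s
    exact Continuous.subtype_mk
      ((ρ_continuous s.2.2.1 s.2.2.2.1 s.2.2.2.2).comp continuous_subtype_val) _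
  · -- retraction
    intro s
    funext x
    exact Subtype.ext (ρ_idem s.2.2.1 s.2.2.2.1 _)
  · -- compact_range
    intro s
    rw [range_rr]
    exact (isClosed_of_good s.2).isCompact
  · -- metrizable_range
    intro s
    haveI : Countable ↥(Set.range (rr s)) := by
      rw [range_rr]
      exact s.2.1.to_subtype
    exact metrizable_of_countable_embedding
      (f := fun y : ↥(Set.range (rr s)) => ((y : ↥(Set.Iic η)) : Ordinal.{u}))
      (Topology.IsEmbedding.subtypeVal.comp Topology.IsEmbedding.subtypeVal)
  · -- comp_eq_of_le
    intro s t hst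
    have hsub : Subtype.val '' s.1 ⊆ Subtype.val '' t.1 := Set.image_mono hst
    constructor
    · funext x
      exact Subtype.ext (ρ_fix (hsub (ρ_mem s.2.2.1 s.2.2.2.1 _)))
    · funext x
      refine Subtype.ext (le_antisymm ?_ ?_)
      · exact ρ_mono s.2.2.2.1 (ρ_le t.2.2.2.1 _)
      · exact le_ρ (ρ_mem s.2.2.1 s.2.2.2.1 _)
          (ρ_mono_set s.2.2.1 s.2.2.2.1 hsub _)
  · -- seq_sup
    intro u hu
    have hval : Topology.IsClosedEmbedding (Subtype.val : ↥(Set.Iic η) → Ordinal.{u}) :=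
      Topology.IsClosedEmbedding.subtypeVal isClosed_Iic
    have himg : Subtype.val '' closure (⋃ n, (u n).1)
        = closure (⋃ n, Subtype.val '' (u n).1) := by
      rw [← hval.closure_image_eq, Set.image_iUnion]
    have hUc : (⋃ n, Subtype.val '' (u n).1).Countable :=
      Set.countable_iUnion fun n => (u n).2.1.image _
    have hbdd : BddAbove (⋃ n, Subtype.val '' (u n).1) := by
      refine ⟨η, ?_⟩
      rintro a ha
      obtain ⟨n, hn⟩ := Set.mem_iUnion.mp ha
      obtain ⟨y, -, rfl⟩ := hn
      exact Set.mem_Iic.mp y.2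
    have tc : (closure (⋃ n, (u n).1)).Countable := by
      have h1 : (Subtype.val '' closure (⋃ n, (u n).1)).Countable := by
        rw [himg]
        exact countable_closure hUc hbdd
      exact (h1.preimage Subtype.val_injective).mono (Set.subset_preimage_image _ _)
    have tcl : IsClosed (Subtype.val '' closure (⋃ n, (u n).1)) := by
      rw [himg]; exact isClosed_closure
    have t0 : (0 : Ordinal.{u}) ∈ Subtype.val '' closure (⋃ n, (u n).1) := by
      rw [himg]
      exact subset_closure (Set.mem_iUnion.mpr ⟨0, (u 0).2.2.2.1⟩)
    have tadm : adm (Subtype.val '' closure (⋃ n, (u n).1)) := by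
      rw [himg]
      intro a ha hl b hb
      have hkey := ((Ordinal.mem_closure_tfae a (⋃ n, Subtype.val '' (u n).1)).out 0 2).mp ha
      have hlt : b < sSup ((⋃ n, Subtype.val '' (u n).1) ∩ Set.Iic a) := by
        rw [hkey.2]; exact hb
      obtain ⟨c, hc, hbc⟩ := exists_lt_of_lt_csSup hkey.1 hlt
      rcases eq_or_lt_of_le (Set.mem_Iic.mp hc.2) with heq | hca
      · obtain ⟨n, hn⟩ := Set.mem_iUnion.mp hc.1
        rw [heq] at hn
        obtain ⟨c', hc', h1, h2⟩ := (u n).2.2.2.2 a hn hl b hb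
        exact ⟨c', subset_closure (Set.mem_iUnion.mpr ⟨n, hc'⟩), h1, h2⟩
      · exact ⟨c, subset_closure hc.1, hbc, hca⟩
    have tGood : Good η (closure (⋃ n, (u n).1)) := ⟨tc, tcl, t0, tadm⟩
    refine ⟨⟨closure (⋃ n, (u n).1), tGood⟩, ⟨?_, ?_⟩, ?_⟩
    · rintro _ ⟨n, rfl⟩
      exact (Set.subset_iUnion (fun n => (u n).1) n).trans subset_closure
    · intro C hC
      exact closure_minimal (Set.iUnion_subset fun n => hC ⟨n, rfl⟩) (isClosed_of_good C.2)
    · intro x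
      rw [Topology.IsEmbedding.subtypeVal.tendsto_nhds_iff]
      have hmono : Monotone fun n => ρ (Subtype.val '' (u n).1) (x : Ordinal.{u}) := by
        intro i j hij
        exact ρ_mono_set (u i).2.2.1 (u i).2.2.2.1 (Set.image_mono (hu hij)) _
      have hbddr : BddAbove (Set.range fun n => ρ (Subtype.val '' (u n).1) (x : Ordinal.{u})) := by
        refine ⟨(x : Ordinal.{u}), ?_⟩
        rintro _ ⟨n, rfl⟩
        exact ρ_le (u n).2.2.2.1 _
      have htendsto := tendsto_atTop_ciSup hmono hbddr
      have heq : (⨆ n, ρ (Subtype.val '' (u n).1) (x : Ordinal.{u}))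
          = ρ (Subtype.val '' closure (⋃ n, (u n).1)) (x : Ordinal.{u}) := by
        apply le_antisymm
        · refine ciSup_le fun n => ρ_mono_set (u n).2.2.1 (u n).2.2.2.1 ?_ _
          rw [himg]
          exact (Set.subset_iUnion (fun n => Subtype.val '' (u n).1) n).trans subset_closure
        · have hcmem : ρ (Subtype.val '' closure (⋃ n, (u n).1)) (x : Ordinal.{u})
              ∈ closure (⋃ n, Subtype.val '' (u n).1) := by
            rw [← himg]
            exact ρ_mem tcl t0 _
          have hkey := ((Ordinal.mem_closure_tfae _ (⋃ n, Subtype.val '' (u n).1)).out 0 2).mp hcmem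
          have hcx : ρ (Subtype.val '' closure (⋃ n, (u n).1)) (x : Ordinal.{u})
              ≤ (x : Ordinal.{u}) := ρ_le t0 _
          refine le_trans (le_of_eq hkey.2.symm) (csSup_le hkey.1 ?_)
          rintro b ⟨hbU, hbc⟩
          obtain ⟨n, hbn⟩ := Set.mem_iUnion.mp hbU
          exact (le_ρ hbn ((Set.mem_Iic.mp hbc).trans hcx)).trans (le_ciSup hbddr n)
      have hfinal : Filter.Tendsto (fun n => ρ (Subtype.val '' (u n).1) (x : Ordinal.{u}))
          atTop (𝓝 (ρ (Subtype.val '' closure (⋃ n, (u n).1)) (x : Ordinal.{u}))) :=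
        heq ▸ htendsto
      exact hfinal
  · -- tendsto_id
    intro x
    rw [Topology.IsEmbedding.subtypeVal.tendsto_nhds_iff]
    by_cases hx : Order.IsSuccLimit (x : Ordinal.{u})
    · rw [(SuccOrder.hasBasis_nhds_Ioc_of_exists_lt ⟨0, hx.pos⟩).tendsto_right_iff]
      intro β hβ
      have hβη : Order.succ β ∈ Set.Iic η :=
        Set.mem_Iic.mpr (Order.succ_le_of_lt (hβ.trans_le (Set.mem_Iic.mp x.2)))
      have hw : ¬ Order.IsSuccLimit ((⟨Order.succ β, hβη⟩ : ↥(Set.Iic η)) : Ordinal.{u}) := by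
        intro hl
        exact lt_irrefl _ (hl.succ_lt (Order.lt_succ β))
      have hE : Good η {zeroX η, ⟨Order.succ β, hβη⟩} := good_pair η _ hw
      filter_upwards [Filter.eventually_ge_atTop
        (⟨{zeroX η, ⟨Order.succ β, hβη⟩}, hE⟩ : {A : Set ↥(Set.Iic η) // Good η A})] with A hA
      have hwA : Order.succ β ∈ Subtype.val '' A.1 :=
        ⟨⟨Order.succ β, hβη⟩, hA (Set.mem_insert_of_mem _ rfl), rfl⟩
      refine Set.mem_Ioc.mpr ⟨?_, ?_⟩
      · exact (Order.lt_succ β).trans_le (le_ρ hwA (Order.succ_le_of_lt hβ))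
      · exact ρ_le A.2.2.2.1 _
    · rw [Ordinal.nhds_eq_pure.2 hx, Filter.tendsto_pure]
      have hE : Good η {zeroX η, x} := good_pair η x hx
      filter_upwards [Filter.eventually_ge_atTop
        (⟨{zeroX η, x}, hE⟩ : {A : Set ↥(Set.Iic η) // Good η A})] with A hA
      exact ρ_fix ⟨x, hA (Set.mem_insert_of_mem _ rfl), rfl⟩
end
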